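/- arXiv:2401.00760 — 8 statements merged into one kernel-verified Lean document; each statement's English description precedes it below -/
import Mathlib

section
/- If g is factored into a product of three irreducible quadratic polynomials Q1, Q2, Q3 in k[x,y], then g can be written in the form (A): g = H1·H2 with H1 = y² + (a1x² + a2x + a3) and H2 = y² + (−4x⁴ + a4x³ + a5x² + a6x + a7) for some a1,…,a7 ∈ k. -/
section PolyCore

open Polynomial

variable {k : Type*} [Field k]

lemma rep_deg2' {f : k[X]} (h : f.natDegree ≤ 2) :
    f = C (f.coeff 2) * X ^ 2 + C (f.coeff 1) * X + C (f.coeff 0) := by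
  have h3 : f.natDegree < 3 := by omega
  conv_lhs => rw [f.as_sum_range' 3 h3]
  rw [Finset.sum_range_succ, Finset.sum_range_succ, Finset.sum_range_one]
  simp only [← Polynomial.C_mul_X_pow_eq_monomial, pow_zero, pow_one, mul_one]
  ring1

lemma rep_deg4' {f : k[X]} (h : f.natDegree ≤ 4) :
    f = C (f.coeff 4) * X ^ 4 + C (f.coeff 3) * X ^ 3 + C (f.coeff 2) * X ^ 2
      + C (f.coeff 1) * X + C (f.coeff 0) := by
  have h5 : f.natDegree < 5 := by omega
  conv_lhs => rw [f.as_sum_range' 5 h5]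
  rw [Finset.sum_range_succ, Finset.sum_range_succ, Finset.sum_range_succ,
    Finset.sum_range_succ, Finset.sum_range_one]
  simp only [← Polynomial.C_mul_X_pow_eq_monomial, pow_zero, pow_one, mul_one]
  ring1


lemma coreB (hm4 : (-4:k) ≠ 0)
    {c1 c2 c3 : k} {B1 B2 B3 C1 C2 C3 p q : k[X]}
    (hB1 : B1.natDegree ≤ 1) (hC1 : C1.natDegree ≤ 2) (hC2 : C2.natDegree ≤ 2)
    (hC3 : C3.natDegree ≤ 2)
    (H3 : ¬ (c3 = 0 ∧ B3 = 0 ∧ ∃ a, C3 = C a))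
    (hp4 : p.coeff 4 = -4)
    (hc1 : c1 ≠ 0) (hc3 : c3 = 0)
    (E5 : C c1 * C c2 * B3 + C c1 * C c3 * B2 + C c2 * C c3 * B1 = 0)
    (E4 : C c1 * C c2 * C3 + C c1 * C c3 * C2 + C c2 * C c3 * C1
      + C c1 * B2 * B3 + C c2 * B1 * B3 + C c3 * B1 * B2 = 1)
    (E3 : C c1 * B2 * C3 + C c1 * C2 * B3 + C c2 * B1 * C3 + C c2 * C1 * B3
      + C c3 * B1 * C2 + C c3 * C1 * B2 + B1 * B2 * B3 = 0)
    (E2 : C c1 * C2 * C3 + C c2 * C1 * C3 + C c3 * C1 * C2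
      + B1 * B2 * C3 + B1 * C2 * B3 + C1 * B2 * B3 = p)
    (E1 : B1 * C2 * C3 + C1 * B2 * C3 + C1 * C2 * B3 = 0)
    (E0 : C1 * C2 * C3 = q) :
    ∃ f1 f2 : k[X], f1.natDegree ≤ 2 ∧ f2.natDegree ≤ 4 ∧ f2.coeff 4 = -4
      ∧ p = f1 + f2 ∧ q = f1 * f2 := by
  have hc30 : (C c3 : k[X]) = 0 := by rw [hc3, map_zero]
  have hCc1 : (C c1 : k[X]) ≠ 0 := by simpa using hc1
  by_cases hc2 : c2 = 0
  · have hc20 : (C c2 : k[X]) = 0 := by rw [hc2, map_zero]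
    have h4' : C c1 * (B2 * B3) = 1 := by
      linear_combination E4 - (C c1 * C3 + C c3 * C1 + B1 * B3) * hc20
        - (C c1 * C2 + B1 * B2) * hc30
    have hB2 : B2 ≠ 0 := by
      intro h; rw [h, zero_mul, mul_zero] at h4'; exact one_ne_zero h4'.symm
    have hB3 : B3 ≠ 0 := by
      intro h; rw [h, mul_zero, mul_zero] at h4'; exact one_ne_zero h4'.symm
    have hdeg : (C c1 * (B2 * B3)).natDegree = 0 := by rw [h4', natDegree_one]
    rw [natDegree_mul hCc1 (mul_ne_zero hB2 hB3), natDegree_mul hB2 hB3,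
      natDegree_C] at hdeg
    obtain ⟨e2, hB2e⟩ := Polynomial.natDegree_eq_zero.mp (by omega : B2.natDegree = 0)
    obtain ⟨e3, hB3e⟩ := Polynomial.natDegree_eq_zero.mp (by omega : B3.natDegree = 0)
    subst hB2e hB3e
    have h3' : C c1 * (C e2 * C3 + C e3 * C2) + C e2 * C e3 * B1 = 0 := by
      linear_combination E3 - (B1 * C3 + C1 * C e3) * hc20 - (B1 * C2 + C1 * C e2) * hc30
    have h1' : B1 * (C2 * C3) + C1 * (C e2 * C3 + C e3 * C2) = 0 := by
      linear_combination E1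
    have hB1f : B1 * (C c1 * (C2 * C3) - C e2 * C e3 * C1) = 0 := by
      linear_combination C c1 * h1' - C1 * h3'
    rcases mul_eq_zero.mp hB1f with hB10 | hkey
    · have hS : C c1 * (C e2 * C3 + C e3 * C2) = 0 := by
        linear_combination h3' - (C e2 * C e3) * hB10
      have hS0 : C e2 * C3 + C e3 * C2 = 0 := (mul_eq_zero.mp hS).resolve_left hCc1
      refine ⟨C e2 * C e3 * C1, C c1 * (C2 * C3), ?_, ?_, ?_, ?_, ?_⟩
      · refine le_trans natDegree_mul_le ?_
        refine le_trans (add_le_add natDegree_mul_le hC1) ?_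
        simp [natDegree_C]
      · refine le_trans natDegree_mul_le ?_
        refine le_trans (add_le_add le_rfl natDegree_mul_le) ?_
        have := natDegree_C (a := c1)
        omega
      · -- coeff 4 of f2 is -4
        have hsum : p = C e2 * C e3 * C1 + C c1 * (C2 * C3) := by
          linear_combination -E2 + (C1 * C3) * hc20 + (C1 * C2) * hc30
            + (C e2 * C3 + C2 * C e3) * hB10
        have h14 : C1.coeff 4 = 0 :=
          coeff_eq_zero_of_natDegree_lt (lt_of_le_of_lt hC1 (by norm_num))
        have hx := congrArg (fun f => Polynomial.coeff f 4) hsum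
        simp only [coeff_add, mul_assoc, coeff_C_mul, h14, mul_zero, hp4] at hx
        rw [coeff_C_mul]
        linear_combination -hx
      · linear_combination -E2 + (C1 * C3) * hc20 + (C1 * C2) * hc30
          + (C e2 * C3 + C2 * C e3) * hB10
      · linear_combination -E0 - (C1 * C2 * C3) * h4'
    · exfalso
      have key : C c1 * p = C c1 * C e2 * C e3 * C1 + C c1 * C e2 * C e3 * C1
          - C e2 * C e3 * B1 ^ 2 := by
        linear_combination (-(C c1)) * E2 + B1 * h3' + C c1 * hkey
          + (C c1 * C1 * C3) * hc20 + (C c1 * C1 * C2) * hc30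
      have h14 : C1.coeff 4 = 0 :=
        coeff_eq_zero_of_natDegree_lt (lt_of_le_of_lt hC1 (by norm_num))
      have hB14 : (B1 ^ 2).coeff 4 = 0 := by
        refine coeff_eq_zero_of_natDegree_lt ?_
        have : (B1 ^ 2).natDegree ≤ 2 := by
          refine le_trans (natDegree_pow_le) (by omega)
        omega
      have hx := congrArg (fun f => Polynomial.coeff f 4) key
      simp only [coeff_add, coeff_sub, mul_assoc, coeff_C_mul, h14, hB14, mul_zero, hp4,
        sub_zero, zero_sub, mul_neg, neg_zero, add_zero, zero_add] at hx
      have h0 : c1 * (-4) = 0 := by linear_combination hx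
      rcases mul_eq_zero.mp h0 with h | h
      · exact absurd h hc1
      · exact hm4 h
  · -- c2 ≠ 0 : contradiction via H3
    exfalso
    have hCc2 : (C c2 : k[X]) ≠ 0 := by simpa using hc2
    have h5' : C c1 * C c2 * B3 = 0 := by
      linear_combination E5 - (C c1 * B2 + C c2 * B1) * hc30
    have hB3 : B3 = 0 := by
      rcases mul_eq_zero.mp h5' with h | h
      · exact absurd h (mul_ne_zero hCc1 hCc2)
      · exact h
    have h4' : C c1 * C c2 * C3 = 1 := by
      linear_combination E4 - (C c1 * C2 + C c2 * C1 + B1 * B2) * hc30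
        - (C c1 * B2 + C c2 * B1) * hB3
    have hu : IsUnit C3 := IsUnit.of_mul_eq_one (a := C3) (C c1 * C c2) (by linear_combination h4')
    obtain ⟨a, -, ha⟩ := Polynomial.isUnit_iff.mp hu
    exact H3 ⟨hc3, hB3, a, ha.symm⟩

lemma coreA (hm4 : (-4:k) ≠ 0)
    {c1 c2 c3 : k} {B1 B2 B3 C1 C2 C3 p q : k[X]}
    (hB1 : B1.natDegree ≤ 1) (hC1 : C1.natDegree ≤ 2) (hC2 : C2.natDegree ≤ 2)
    (hC3 : C3.natDegree ≤ 2)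
    (H2 : ¬ (c2 = 0 ∧ B2 = 0 ∧ ∃ a, C2 = C a))
    (H3 : ¬ (c3 = 0 ∧ B3 = 0 ∧ ∃ a, C3 = C a))
    (hp4 : p.coeff 4 = -4)
    (hc1 : c1 ≠ 0) (hcc : c2 * c3 = 0)
    (E5 : C c1 * C c2 * B3 + C c1 * C c3 * B2 + C c2 * C c3 * B1 = 0)
    (E4 : C c1 * C c2 * C3 + C c1 * C c3 * C2 + C c2 * C c3 * C1
      + C c1 * B2 * B3 + C c2 * B1 * B3 + C c3 * B1 * B2 = 1)
    (E3 : C c1 * B2 * C3 + C c1 * C2 * B3 + C c2 * B1 * C3 + C c2 * C1 * B3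
      + C c3 * B1 * C2 + C c3 * C1 * B2 + B1 * B2 * B3 = 0)
    (E2 : C c1 * C2 * C3 + C c2 * C1 * C3 + C c3 * C1 * C2
      + B1 * B2 * C3 + B1 * C2 * B3 + C1 * B2 * B3 = p)
    (E1 : B1 * C2 * C3 + C1 * B2 * C3 + C1 * C2 * B3 = 0)
    (E0 : C1 * C2 * C3 = q) :
    ∃ f1 f2 : k[X], f1.natDegree ≤ 2 ∧ f2.natDegree ≤ 4 ∧ f2.coeff 4 = -4
      ∧ p = f1 + f2 ∧ q = f1 * f2 := by
  rcases mul_eq_zero.mp hcc with h2 | h3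
  · exact coreB (c1 := c1) (c2 := c3) (c3 := c2) (B1 := B1) (B2 := B3) (B3 := B2)
      (C1 := C1) (C2 := C3) (C3 := C2) (p := p) (q := q) hm4 hB1 hC1 hC3 hC2 H2 hp4 hc1 h2
      (by linear_combination E5) (by linear_combination E4) (by linear_combination E3)
      (by linear_combination E2) (by linear_combination E1) (by linear_combination E0)
  · exact coreB hm4 hB1 hC1 hC2 hC3 H3 hp4 hc1 h3 E5 E4 E3 E2 E1 E0

lemma coreTop (hm4 : (-4:k) ≠ 0)
    {c1 c2 c3 : k} {B1 B2 B3 C1 C2 C3 p q : k[X]}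
    (hB1 : B1.natDegree ≤ 1) (hB2 : B2.natDegree ≤ 1) (hB3 : B3.natDegree ≤ 1)
    (hC1 : C1.natDegree ≤ 2) (hC2 : C2.natDegree ≤ 2) (hC3 : C3.natDegree ≤ 2)
    (H1 : ¬ (c1 = 0 ∧ B1 = 0 ∧ ∃ a, C1 = C a))
    (H2 : ¬ (c2 = 0 ∧ B2 = 0 ∧ ∃ a, C2 = C a))
    (H3 : ¬ (c3 = 0 ∧ B3 = 0 ∧ ∃ a, C3 = C a))
    (hp4 : p.coeff 4 = -4)
    (E6 : C c1 * C c2 * C c3 = (0 : k[X]))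
    (E5 : C c1 * C c2 * B3 + C c1 * C c3 * B2 + C c2 * C c3 * B1 = 0)
    (E4 : C c1 * C c2 * C3 + C c1 * C c3 * C2 + C c2 * C c3 * C1
      + C c1 * B2 * B3 + C c2 * B1 * B3 + C c3 * B1 * B2 = 1)
    (E3 : C c1 * B2 * C3 + C c1 * C2 * B3 + C c2 * B1 * C3 + C c2 * C1 * B3
      + C c3 * B1 * C2 + C c3 * C1 * B2 + B1 * B2 * B3 = 0)
    (E2 : C c1 * C2 * C3 + C c2 * C1 * C3 + C c3 * C1 * C2
      + B1 * B2 * C3 + B1 * C2 * B3 + C1 * B2 * B3 = p)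
    (E1 : B1 * C2 * C3 + C1 * B2 * C3 + C1 * C2 * B3 = 0)
    (E0 : C1 * C2 * C3 = q) :
    ∃ f1 f2 : k[X], f1.natDegree ≤ 2 ∧ f2.natDegree ≤ 4 ∧ f2.coeff 4 = -4
      ∧ p = f1 + f2 ∧ q = f1 * f2 := by
  have hE6 : c1 * c2 * c3 = 0 := by
    have : (C (c1 * c2 * c3) : k[X]) = 0 := by rw [map_mul, map_mul]; exact E6
    exact (Polynomial.C_eq_zero).mp this
  by_cases h1 : c1 = 0
  · by_cases h2 : c2 = 0
    · by_cases h3 : c3 = 0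
      · exfalso
        have h10 : (C c1 : k[X]) = 0 := by rw [h1, map_zero]
        have h20 : (C c2 : k[X]) = 0 := by rw [h2, map_zero]
        have h30 : (C c3 : k[X]) = 0 := by rw [h3, map_zero]
        have hbad : (1 : k[X]) = 0 := by
          linear_combination -E4 + (C c2 * C3 + C c3 * C2 + B2 * B3) * h10
            + (C c3 * C1 + B1 * B3) * h20 + (B1 * B2) * h30
        exact one_ne_zero hbad
      · -- c3 ≠ 0 : use index 3 as the distinguished one, order (3,1,2)
        refine coreA (c1 := c3) (c2 := c1) (c3 := c2) (B1 := B3) (B2 := B1) (B3 := B2)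
          (C1 := C3) (C2 := C1) (C3 := C2) (p := p) (q := q)
          hm4 hB3 hC3 hC1 hC2 H1 H2 hp4 h3 (by rw [h1, zero_mul])
          (by linear_combination E5) (by linear_combination E4) (by linear_combination E3)
          (by linear_combination E2) (by linear_combination E1) (by linear_combination E0)
    · -- c2 ≠ 0 : order (2,1,3)
      refine coreA (c1 := c2) (c2 := c1) (c3 := c3) (B1 := B2) (B2 := B1) (B3 := B3)
        (C1 := C2) (C2 := C1) (C3 := C3) (p := p) (q := q)
        hm4 hB2 hC2 hC1 hC3 H1 H3 hp4 h2 (by rw [h1, zero_mul])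
        (by linear_combination E5) (by linear_combination E4) (by linear_combination E3)
        (by linear_combination E2) (by linear_combination E1) (by linear_combination E0)
  · -- c1 ≠ 0
    have hcc : c2 * c3 = 0 := by
      rcases mul_eq_zero.mp hE6 with h | h
      · rcases mul_eq_zero.mp h with h' | h'
        · exact absurd h' h1
        · rw [h', zero_mul]
      · rw [h, mul_zero]
    exact coreA hm4 hB1 hC1 hC2 hC3 H2 H3 hp4 h1 hcc E5 E4 E3 E2 E1 E0


lemma extract7 {A6 A5 A4 A3 A2 A1 A0 p q : k[X]}
    (h : C A6 * X ^ 6 + C A5 * X ^ 5 + C A4 * X ^ 4 + C A3 * X ^ 3 + C A2 * X ^ 2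
        + C A1 * X + C A0 = X ^ 4 + C p * X ^ 2 + C q) :
    A6 = 0 ∧ A5 = 0 ∧ A4 = 1 ∧ A3 = 0 ∧ A2 = p ∧ A1 = 0 ∧ A0 = q := by
  refine ⟨?_, ?_, ?_, ?_, ?_, ?_, ?_⟩
  · have := congrArg (fun f => f.coeff 6) h
    simpa [coeff_add, coeff_C_mul, coeff_X_pow, coeff_C, coeff_X] using this
  · have := congrArg (fun f => f.coeff 5) h
    simpa [coeff_add, coeff_C_mul, coeff_X_pow, coeff_C, coeff_X] using this
  · have := congrArg (fun f => f.coeff 4) h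
    simpa [coeff_add, coeff_C_mul, coeff_X_pow, coeff_C, coeff_X] using this
  · have := congrArg (fun f => f.coeff 3) h
    simpa [coeff_add, coeff_C_mul, coeff_X_pow, coeff_C, coeff_X] using this
  · have := congrArg (fun f => f.coeff 2) h
    simpa [coeff_add, coeff_C_mul, coeff_X_pow, coeff_C, coeff_X] using this
  · have := congrArg (fun f => f.coeff 1) h
    simpa [coeff_add, coeff_C_mul, coeff_X_pow, coeff_C, coeff_X] using this
  · have := congrArg (fun f => f.coeff 0) h
    simpa [coeff_add, coeff_C_mul, coeff_X_pow, coeff_C, coeff_X] using this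

lemma coreMain (hm4 : (-4:k) ≠ 0)
    {c1 c2 c3 : k} {B1 B2 B3 C1 C2 C3 p q : k[X]}
    (hB1 : B1.natDegree ≤ 1) (hB2 : B2.natDegree ≤ 1) (hB3 : B3.natDegree ≤ 1)
    (hC1 : C1.natDegree ≤ 2) (hC2 : C2.natDegree ≤ 2) (hC3 : C3.natDegree ≤ 2)
    (H1 : ¬ (c1 = 0 ∧ B1 = 0 ∧ ∃ a, C1 = C a))
    (H2 : ¬ (c2 = 0 ∧ B2 = 0 ∧ ∃ a, C2 = C a))
    (H3 : ¬ (c3 = 0 ∧ B3 = 0 ∧ ∃ a, C3 = C a))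
    (hp4 : p.coeff 4 = -4)
    (key : (Polynomial.C (C c1) * X ^ 2 + Polynomial.C B1 * X + Polynomial.C C1)
        * (Polynomial.C (C c2) * X ^ 2 + Polynomial.C B2 * X + Polynomial.C C2)
        * (Polynomial.C (C c3) * X ^ 2 + Polynomial.C B3 * X + Polynomial.C C3)
      = X ^ 4 + Polynomial.C p * X ^ 2 + Polynomial.C q) :
    ∃ f1 f2 : k[X], f1.natDegree ≤ 2 ∧ f2.natDegree ≤ 4 ∧ f2.coeff 4 = -4
      ∧ p = f1 + f2 ∧ q = f1 * f2 := by
  have hexp : (Polynomial.C (C c1) * X ^ 2 + Polynomial.C B1 * X + Polynomial.C C1)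
        * (Polynomial.C (C c2) * X ^ 2 + Polynomial.C B2 * X + Polynomial.C C2)
        * (Polynomial.C (C c3) * X ^ 2 + Polynomial.C B3 * X + Polynomial.C C3)
      = Polynomial.C (C c1 * C c2 * C c3) * X ^ 6
        + Polynomial.C (C c1 * C c2 * B3 + C c1 * C c3 * B2 + C c2 * C c3 * B1) * X ^ 5
        + Polynomial.C (C c1 * C c2 * C3 + C c1 * C c3 * C2 + C c2 * C c3 * C1
            + C c1 * B2 * B3 + C c2 * B1 * B3 + C c3 * B1 * B2) * X ^ 4
        + Polynomial.C (C c1 * B2 * C3 + C c1 * C2 * B3 + C c2 * B1 * C3 + C c2 * C1 * B3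
            + C c3 * B1 * C2 + C c3 * C1 * B2 + B1 * B2 * B3) * X ^ 3
        + Polynomial.C (C c1 * C2 * C3 + C c2 * C1 * C3 + C c3 * C1 * C2
            + B1 * B2 * C3 + B1 * C2 * B3 + C1 * B2 * B3) * X ^ 2
        + Polynomial.C (B1 * C2 * C3 + C1 * B2 * C3 + C1 * C2 * B3) * X
        + Polynomial.C (C1 * C2 * C3) := by
    simp only [Polynomial.C_add, Polynomial.C_mul]
    ring1
  have key2 := hexp.symm.trans key
  obtain ⟨E6, E5, E4, E3, E2, E1, E0⟩ := extract7 key2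
  exact coreTop hm4 hB1 hB2 hB3 hC1 hC2 hC3 H1 H2 H3 hp4 E6 E5 E4 E3 E2 E1 E0

end PolyCore

open MvPolynomial

section MvGlue

variable {k : Type*} [CommRing k]

lemma finsupp_fin2 (m : Fin 2 →₀ ℕ) : m = Finsupp.single 0 (m 0) + Finsupp.single 1 (m 1) := by
  ext a; fin_cases a <;> simp [Finsupp.single_apply]

lemma rep2 (Q : MvPolynomial (Fin 2) k) (hQ : Q.totalDegree ≤ 2) :
    ∃ c d e f g h : k, Q = C c * X 1 ^ 2 + C d * X 0 * X 1 + C e * X 1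
      + C f * X 0 ^ 2 + C g * X 0 + C h := by
  classical
  set Rep : MvPolynomial (Fin 2) k → Prop := fun P => ∃ c d e f g h : k,
    P = C c * X 1 ^ 2 + C d * X 0 * X 1 + C e * X 1 + C f * X 0 ^ 2 + C g * X 0 + C h with hRep
  suffices h : Rep Q by exact h
  have hsum := Q.support_sum_monomial_coeff
  rw [← hsum]
  apply Finset.sum_induction _ Rep
  · rintro a b ⟨c,d,e,f,g,h,rfl⟩ ⟨c',d',e',f',g',h',rfl⟩
    exact ⟨c+c', d+d', e+e', f+f', g+g', h+h', by push_cast [map_add]; ring⟩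
  · exact ⟨0,0,0,0,0,0, by simp⟩
  · intro m hm
    have hdeg : m 0 + m 1 ≤ 2 := by
      have := le_totalDegree hm
      have h2 : (m.sum fun _ e => e) = m 0 + m 1 := by
        rw [Finsupp.sum_fintype] <;> simp [Fin.sum_univ_two]
      omega
    have hmono : (monomial m (Q.coeff m)) = C (Q.coeff m) * X 0 ^ (m 0) * X 1 ^ (m 1) := by
      rw [finsupp_fin2 m]
      rw [X_pow_eq_monomial, X_pow_eq_monomial, mul_assoc, monomial_mul, C_mul_monomial]
      simp
    rw [hmono]
    set c := Q.coeff m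
    have h0 : m 0 ≤ 2 := by omega
    have h1 : m 1 ≤ 2 := by omega
    interval_cases h : (m 0) <;> interval_cases h' : (m 1) <;> first
      | omega
      | (refine ⟨c,0,0,0,0,0, ?_⟩; simp only [map_zero, zero_mul, mul_zero, add_zero, zero_add]; ring1)
      | (refine ⟨0,c,0,0,0,0, ?_⟩; simp only [map_zero, zero_mul, mul_zero, add_zero, zero_add]; ring1)
      | (refine ⟨0,0,c,0,0,0, ?_⟩; simp only [map_zero, zero_mul, mul_zero, add_zero, zero_add]; ring1)
      | (refine ⟨0,0,0,c,0,0, ?_⟩; simp only [map_zero, zero_mul, mul_zero, add_zero, zero_add]; ring1)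
      | (refine ⟨0,0,0,0,c,0, ?_⟩; simp only [map_zero, zero_mul, mul_zero, add_zero, zero_add]; ring1)
      | (refine ⟨0,0,0,0,0,c, ?_⟩; simp only [map_zero, zero_mul, mul_zero, add_zero, zero_add]; ring1)

noncomputable def phi : MvPolynomial (Fin 2) k →+* Polynomial (Polynomial k) :=
  (MvPolynomial.aeval (R := k) (S₁ := Polynomial (Polynomial k))
    ![Polynomial.C Polynomial.X, Polynomial.X]).toRingHom

noncomputable def psi : Polynomial (Polynomial k) →+* MvPolynomial (Fin 2) k :=
  Polynomial.eval₂RingHom (Polynomial.eval₂RingHom MvPolynomial.C (X 0)) (X 1)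

lemma psi_phi (P : MvPolynomial (Fin 2) k) : psi (phi P) = P := by
  induction P using MvPolynomial.induction_on with
  | C a => simp [phi, psi]
  | add p q hp hq => simp [map_add, hp, hq]
  | mul_X p i hp =>
    rw [map_mul, map_mul, hp]
    congr 1
    fin_cases i <;> simp [phi, psi]

lemma phi_inj : Function.Injective (phi (k := k)) :=
  Function.LeftInverse.injective psi_phi

lemma phi_quad (c d e f g h : k) :
    phi (C c * X 1 ^ 2 + C d * X 0 * X 1 + C e * X 1 + C f * X 0 ^ 2 + C g * X 0 + C h)
      = Polynomial.C (Polynomial.C c) * Polynomial.X ^ 2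
        + Polynomial.C (Polynomial.C d * Polynomial.X + Polynomial.C e) * Polynomial.X
        + Polynomial.C (Polynomial.C f * Polynomial.X ^ 2 + Polynomial.C g * Polynomial.X
            + Polynomial.C h) := by
  simp only [phi, map_add, map_mul, map_pow, AlgHom.toRingHom_eq_coe, RingHom.coe_coe,
    aeval_X, aeval_C, Matrix.cons_val_zero, Matrix.cons_val_one, Matrix.head_cons,
    Polynomial.algebraMap_apply, Polynomial.algebraMap_eq, Polynomial.C_add, Polynomial.C_mul,
    Polynomial.C_pow]
  ring

lemma phi_g (b60 b50 b40 b32 b30 b22 b20 b12 b10 b02 b00 : k) :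
    phi (C b60 * X 0 ^ 6 + C (-4 : k) * X 0 ^ 4 * X 1 ^ 2
      + C b50 * X 0 ^ 5 + C b32 * X 0 ^ 3 * X 1 ^ 2
      + C b40 * X 0 ^ 4 + C b22 * X 0 ^ 2 * X 1 ^ 2 + C (1:k) * X 1 ^ 4
      + C b30 * X 0 ^ 3 + C b12 * X 0 * X 1 ^ 2
      + C b20 * X 0 ^ 2 + C b02 * X 1 ^ 2 + C b10 * X 0 + C b00)
    = Polynomial.X ^ 4
      + Polynomial.C (Polynomial.C (-4:k) * Polynomial.X ^ 4 + Polynomial.C b32 * Polynomial.X ^ 3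
          + Polynomial.C b22 * Polynomial.X ^ 2 + Polynomial.C b12 * Polynomial.X
          + Polynomial.C b02) * Polynomial.X ^ 2
      + Polynomial.C (Polynomial.C b60 * Polynomial.X ^ 6 + Polynomial.C b50 * Polynomial.X ^ 5
          + Polynomial.C b40 * Polynomial.X ^ 4 + Polynomial.C b30 * Polynomial.X ^ 3
          + Polynomial.C b20 * Polynomial.X ^ 2 + Polynomial.C b10 * Polynomial.X
          + Polynomial.C b00) := by
  simp only [phi, map_add, map_mul, map_pow, AlgHom.toRingHom_eq_coe, RingHom.coe_coe,
    aeval_X, aeval_C, Matrix.cons_val_zero, Matrix.cons_val_one, Matrix.head_cons,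
    Polynomial.algebraMap_apply, Polynomial.algebraMap_eq, Polynomial.C_add, Polynomial.C_mul,
    Polynomial.C_pow, Polynomial.C_1, Polynomial.C_neg]
  ring

lemma phi_form (a1 a2 a3 a4 a5 a6 a7 : k) :
    phi ((X 1 ^ 2 + (C a1 * X 0 ^ 2 + C a2 * X 0 + C a3))
        * (X 1 ^ 2 + (C (-4 : k) * X 0 ^ 4 + C a4 * X 0 ^ 3 + C a5 * X 0 ^ 2
            + C a6 * X 0 + C a7)))
      = (Polynomial.X ^ 2 + Polynomial.C (Polynomial.C a1 * Polynomial.X ^ 2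
            + Polynomial.C a2 * Polynomial.X + Polynomial.C a3))
        * (Polynomial.X ^ 2 + Polynomial.C (Polynomial.C (-4:k) * Polynomial.X ^ 4
            + Polynomial.C a4 * Polynomial.X ^ 3 + Polynomial.C a5 * Polynomial.X ^ 2
            + Polynomial.C a6 * Polynomial.X + Polynomial.C a7)) := by
  simp only [phi, map_add, map_mul, map_pow, AlgHom.toRingHom_eq_coe, RingHom.coe_coe,
    aeval_X, aeval_C, Matrix.cons_val_zero, Matrix.cons_val_one, Matrix.head_cons,
    Polynomial.algebraMap_apply, Polynomial.algebraMap_eq, Polynomial.C_add, Polynomial.C_mul,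
    Polynomial.C_pow, Polynomial.C_neg]
  try ring

end MvGlue
/-- If g is a product of three irreducible quadratic polynomials in k[x,y],
then g can be written in the form (A). -/
theorem stmt_4 {k : Type*} [Field k] (hchar : ringChar k ≠ 2)
    (b60 b50 b42 b40 b32 b30 b22 b20 b12 b10 b04 b02 b00 : k)
    (hb42 : b42 = -4) (hb04 : b04 = 1)
    (g : MvPolynomial (Fin 2) k)
    (hg : g = C b60 * X 0 ^ 6 + C b42 * X 0 ^ 4 * X 1 ^ 2
      + C b50 * X 0 ^ 5 + C b32 * X 0 ^ 3 * X 1 ^ 2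
      + C b40 * X 0 ^ 4 + C b22 * X 0 ^ 2 * X 1 ^ 2 + C b04 * X 1 ^ 4
      + C b30 * X 0 ^ 3 + C b12 * X 0 * X 1 ^ 2
      + C b20 * X 0 ^ 2 + C b02 * X 1 ^ 2 + C b10 * X 0 + C b00)
    (hnz : ¬ (b60 = 0 ∧ b40 = 0 ∧ b20 = 0 ∧ b00 = 0))
    (Q1 Q2 Q3 : MvPolynomial (Fin 2) k)
    (hQ1 : Irreducible Q1) (hQ2 : Irreducible Q2) (hQ3 : Irreducible Q3)
    (hdQ1 : Q1.totalDegree = 2) (hdQ2 : Q2.totalDegree = 2) (hdQ3 : Q3.totalDegree = 2)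
    (hfact : g = Q1 * Q2 * Q3) :
    ∃ a1 a2 a3 a4 a5 a6 a7 : k,
      g = (X 1 ^ 2 + (C a1 * X 0 ^ 2 + C a2 * X 0 + C a3))
        * (X 1 ^ 2 + (C (-4 : k) * X 0 ^ 4 + C a4 * X 0 ^ 3 + C a5 * X 0 ^ 2
            + C a6 * X 0 + C a7)) := by
  subst hb42 hb04
  have h2k : (2:k) ≠ 0 := Ring.two_ne_zero hchar
  have hm4 : (-4:k) ≠ 0 := by
    intro h
    have h4 : (2:k) * 2 = 0 := by linear_combination -h
    rcases mul_eq_zero.mp h4 with h' | h' <;> exact h2k h'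
  obtain ⟨c1, d1, e1, u1, v1, w1, hr1⟩ := rep2 Q1 hdQ1.le
  obtain ⟨c2, d2, e2, u2, v2, w2, hr2⟩ := rep2 Q2 hdQ2.le
  obtain ⟨c3, d3, e3, u3, v3, w3, hr3⟩ := rep2 Q3 hdQ3.le
  -- the images under phi
  have hf1 : phi Q1 = Polynomial.C (Polynomial.C c1) * Polynomial.X ^ 2
      + Polynomial.C (Polynomial.C d1 * Polynomial.X + Polynomial.C e1) * Polynomial.X
      + Polynomial.C (Polynomial.C u1 * Polynomial.X ^ 2 + Polynomial.C v1 * Polynomial.X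
          + Polynomial.C w1) := by rw [hr1]; exact phi_quad c1 d1 e1 u1 v1 w1
  have hf2 : phi Q2 = Polynomial.C (Polynomial.C c2) * Polynomial.X ^ 2
      + Polynomial.C (Polynomial.C d2 * Polynomial.X + Polynomial.C e2) * Polynomial.X
      + Polynomial.C (Polynomial.C u2 * Polynomial.X ^ 2 + Polynomial.C v2 * Polynomial.X
          + Polynomial.C w2) := by rw [hr2]; exact phi_quad c2 d2 e2 u2 v2 w2
  have hf3 : phi Q3 = Polynomial.C (Polynomial.C c3) * Polynomial.X ^ 2
      + Polynomial.C (Polynomial.C d3 * Polynomial.X + Polynomial.C e3) * Polynomial.X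
      + Polynomial.C (Polynomial.C u3 * Polynomial.X ^ 2 + Polynomial.C v3 * Polynomial.X
          + Polynomial.C w3) := by rw [hr3]; exact phi_quad c3 d3 e3 u3 v3 w3
  set p : Polynomial k := Polynomial.C (-4:k) * Polynomial.X ^ 4
      + Polynomial.C b32 * Polynomial.X ^ 3 + Polynomial.C b22 * Polynomial.X ^ 2
      + Polynomial.C b12 * Polynomial.X + Polynomial.C b02 with hp
  set q : Polynomial k := Polynomial.C b60 * Polynomial.X ^ 6 + Polynomial.C b50 * Polynomial.X ^ 5
      + Polynomial.C b40 * Polynomial.X ^ 4 + Polynomial.C b30 * Polynomial.X ^ 3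
      + Polynomial.C b20 * Polynomial.X ^ 2 + Polynomial.C b10 * Polynomial.X
      + Polynomial.C b00 with hq
  have hφg : phi g = Polynomial.X ^ 4 + Polynomial.C p * Polynomial.X ^ 2 + Polynomial.C q := by
    rw [hg, hp, hq]; exact phi_g b60 b50 b40 b32 b30 b22 b20 b12 b10 b02 b00
  have key : (Polynomial.C (Polynomial.C c1) * Polynomial.X ^ 2
        + Polynomial.C (Polynomial.C d1 * Polynomial.X + Polynomial.C e1) * Polynomial.X
        + Polynomial.C (Polynomial.C u1 * Polynomial.X ^ 2 + Polynomial.C v1 * Polynomial.X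
            + Polynomial.C w1))
      * (Polynomial.C (Polynomial.C c2) * Polynomial.X ^ 2
        + Polynomial.C (Polynomial.C d2 * Polynomial.X + Polynomial.C e2) * Polynomial.X
        + Polynomial.C (Polynomial.C u2 * Polynomial.X ^ 2 + Polynomial.C v2 * Polynomial.X
            + Polynomial.C w2))
      * (Polynomial.C (Polynomial.C c3) * Polynomial.X ^ 2
        + Polynomial.C (Polynomial.C d3 * Polynomial.X + Polynomial.C e3) * Polynomial.X
        + Polynomial.C (Polynomial.C u3 * Polynomial.X ^ 2 + Polynomial.C v3 * Polynomial.X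
            + Polynomial.C w3))
      = Polynomial.X ^ 4 + Polynomial.C p * Polynomial.X ^ 2 + Polynomial.C q := by
    rw [← hf1, ← hf2, ← hf3, ← map_mul, ← map_mul, ← hfact]
    exact hφg
  have hp4 : p.coeff 4 = -4 := by
    rw [hp]
    simp [Polynomial.coeff_add, Polynomial.coeff_C_mul, Polynomial.coeff_X_pow,
      Polynomial.coeff_C, Polynomial.coeff_X]
  -- non-constancy hypotheses
  have mkH : ∀ (Q : MvPolynomial (Fin 2) k) (c d e u v w : k),
      Q = C c * X 1 ^ 2 + C d * X 0 * X 1 + C e * X 1 + C u * X 0 ^ 2 + C v * X 0 + C w →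
      Q.totalDegree = 2 →
      ¬ (c = 0 ∧ (Polynomial.C d * Polynomial.X + Polynomial.C e) = 0
        ∧ ∃ a, (Polynomial.C u * Polynomial.X ^ 2 + Polynomial.C v * Polynomial.X
            + Polynomial.C w) = Polynomial.C a) := by
    rintro Q c d e u v w hr hdeg ⟨hc, hB, a, hC⟩
    have hd : d = 0 := by
      have := congrArg (fun f => Polynomial.coeff f 1) hB
      simpa [Polynomial.coeff_add, Polynomial.coeff_C_mul, Polynomial.coeff_X,
        Polynomial.coeff_C] using this
    have he : e = 0 := by
      have := congrArg (fun f => Polynomial.coeff f 0) hB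
      simpa [Polynomial.coeff_add, Polynomial.coeff_C_mul, Polynomial.coeff_X,
        Polynomial.coeff_C] using this
    have hu : u = 0 := by
      have := congrArg (fun f => Polynomial.coeff f 2) hC
      simpa [Polynomial.coeff_add, Polynomial.coeff_C_mul, Polynomial.coeff_X,
        Polynomial.coeff_X_pow, Polynomial.coeff_C] using this
    have hv : v = 0 := by
      have := congrArg (fun f => Polynomial.coeff f 1) hC
      simpa [Polynomial.coeff_add, Polynomial.coeff_C_mul, Polynomial.coeff_X,
        Polynomial.coeff_X_pow, Polynomial.coeff_C] using this
    have hQC : Q = C w := by rw [hr, hc, hd, he, hu, hv]; simp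
    rw [hQC] at hdeg
    simp [totalDegree_C] at hdeg
  have H1 := mkH Q1 c1 d1 e1 u1 v1 w1 hr1 hdQ1
  have H2 := mkH Q2 c2 d2 e2 u2 v2 w2 hr2 hdQ2
  have H3 := mkH Q3 c3 d3 e3 u3 v3 w3 hr3 hdQ3
  obtain ⟨F1, F2, hdF1, hdF2, hco, hs, hpr⟩ :=
    coreMain hm4
      (Polynomial.natDegree_linear_le) (Polynomial.natDegree_linear_le)
      (Polynomial.natDegree_linear_le)
      (Polynomial.natDegree_quadratic_le) (Polynomial.natDegree_quadratic_le)
      (Polynomial.natDegree_quadratic_le)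
      H1 H2 H3 hp4 key
  refine ⟨F1.coeff 2, F1.coeff 1, F1.coeff 0, F2.coeff 3, F2.coeff 2, F2.coeff 1, F2.coeff 0, ?_⟩
  apply phi_inj
  have hrep1 := rep_deg2' hdF1
  have hrep2 := rep_deg4' hdF2
  rw [hco] at hrep2
  rw [phi_form, ← hrep1, ← hrep2, hφg, hs, hpr, Polynomial.C_add, Polynomial.C_mul]
  ring
end

section
/- The polynomial f(x,y) = y⁴ − 2(φ1(x)+φ2(x))y² + (φ1(x)−φ2(x))² is irreducible in k[x,y] for every choice of pairwise distinct elements α1, α2, α3, α4, β1, β2, β3, β4 in k. -/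
section Aux

open Polynomial

/-! ### Auxiliary: monic quadratics and a quartic irreducibility criterion -/

private lemma monic2 {K : Type*} [Field K] {g : K[X]} (hm : g.Monic) (hd : g.natDegree = 2) :
    g = X ^ 2 + C (g.coeff 1) * X + C (g.coeff 0) := by
  ext n
  have h2 : g.coeff 2 = 1 := by
    have := hm.coeff_natDegree; rwa [hd] at this
  rcases n with _ | _ | _ | n
  · simp
  · simp
  · simp [coeff_X_pow, h2]
  · have : g.coeff (n + 3) = 0 := coeff_eq_zero_of_natDegree_lt (by omega)
    simp [coeff_X_pow, this]

private lemma irred4 {K : Type*} [Field K] {q : K[X]} (hm : q.Monic) (hd : q.natDegree = 4)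
    (h1 : ∀ c : K, q.eval c ≠ 0)
    (h2 : ∀ a b c d : K, q ≠ (X ^ 2 + C a * X + C b) * (X ^ 2 + C c * X + C d)) :
    Irreducible q := by
  have hq0 : q ≠ 0 := hm.ne_zero
  constructor
  · intro hu
    have := Polynomial.natDegree_eq_zero_of_isUnit hu
    omega
  · intro g h hgh
    by_contra hcon
    push_neg at hcon
    obtain ⟨hgu, hhu⟩ := hcon
    have hg0 : g ≠ 0 := by rintro rfl; simp at hgh; exact hq0 (by simp [hgh])
    have hh0 : h ≠ 0 := by rintro rfl; simp at hgh; exact hq0 (by simp [hgh])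
    have hdeg : g.natDegree + h.natDegree = 4 := by
      rw [← Polynomial.natDegree_mul hg0 hh0, ← hgh, hd]
    have hg1 : 1 ≤ g.natDegree := by
      by_contra hlt
      push_neg at hlt
      obtain ⟨x, hx⟩ := (Polynomial.natDegree_eq_zero (p := g)).mp (by omega)
      exact hgu (hx ▸ isUnit_C.mpr (isUnit_iff_ne_zero.mpr
        (fun h0 => hg0 (by rw [← hx, h0, map_zero]))))
    have hh1 : 1 ≤ h.natDegree := by
      by_contra hlt
      push_neg at hlt
      obtain ⟨x, hx⟩ := (Polynomial.natDegree_eq_zero (p := h)).mp (by omega)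
      exact hhu (hx ▸ isUnit_C.mpr (isUnit_iff_ne_zero.mpr
        (fun h0 => hh0 (by rw [← hx, h0, map_zero]))))
    -- if any factor has degree 1, q has a root
    have root_of_deg1 : ∀ r : K[X], r.natDegree = 1 → r ∣ q → False := by
      intro r hr hdvd
      obtain ⟨s, hs⟩ := hdvd
      have hr0 : r ≠ 0 := fun h0 => by simp [h0] at hr
      have hc1 : r.coeff 1 ≠ 0 := by
        have := Polynomial.leadingCoeff_ne_zero.mpr hr0
        rwa [Polynomial.leadingCoeff, hr] at this
      have hre : r = C (r.coeff 1) * X + C (r.coeff 0) :=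
        Polynomial.eq_X_add_C_of_natDegree_le_one (le_of_eq hr)
      apply h1 (-(r.coeff 0) / r.coeff 1)
      rw [hs, Polynomial.eval_mul]
      have : r.eval (-(r.coeff 0) / r.coeff 1) = 0 := by
        rw [hre]; simp; field_simp; ring
      rw [this, zero_mul]
    rcases (by omega : g.natDegree = 1 ∨ h.natDegree = 1 ∨
        (g.natDegree = 2 ∧ h.natDegree = 2)) with h1' | h1' | ⟨hg2, hh2⟩
    · exact root_of_deg1 g h1' ⟨h, hgh⟩
    · exact root_of_deg1 h h1' ⟨g, by rw [hgh]; ring⟩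
    · set u := g.leadingCoeff with hu
      have hu0 : u ≠ 0 := leadingCoeff_ne_zero.mpr hg0
      have hlc : g.leadingCoeff * h.leadingCoeff = 1 := by
        have := congrArg Polynomial.leadingCoeff hgh
        rw [Polynomial.leadingCoeff_mul, hm.leadingCoeff] at this
        exact this.symm
      set g' := C u⁻¹ * g with hg'
      set h' := C u * h with hh'
      have hq' : q = g' * h' := by
        rw [hg', hh', hgh]
        rw [mul_mul_mul_comm, ← C_mul, inv_mul_cancel₀ hu0, map_one, one_mul]
      have hg'm : g'.Monic := by
        rw [hg']
        have := Polynomial.monic_C_mul_of_mul_leadingCoeff_eq_one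
          (b := u⁻¹) (p := g) (by rw [mul_comm]; exact mul_inv_cancel₀ hu0)
        exact this
      have hh'm : h'.Monic := by
        rw [hh']
        exact Polynomial.monic_C_mul_of_mul_leadingCoeff_eq_one hlc
      have hg'd : g'.natDegree = 2 := by
        rw [hg', Polynomial.natDegree_C_mul (inv_ne_zero hu0), hg2]
      have hh'd : h'.natDegree = 2 := by
        rw [hh', Polynomial.natDegree_C_mul hu0, hh2]
      exact h2 (g'.coeff 1) (g'.coeff 0) (h'.coeff 1) (h'.coeff 0)
        (by conv_lhs => rw [hq', monic2 hg'm hg'd, monic2 hh'm hh'd])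

/-! ### The key irreducibility computation over a field -/

private lemma irredF {K : Type*} [Field K] (A B : K) (h2 : (2 : K) ≠ 0)
    (hA : ¬IsSquare A) (hB : ¬IsSquare B) (hAB : ¬IsSquare (A * B)) :
    Irreducible ((X : K[X]) ^ 4 - C (2 * (A + B)) * X ^ 2 + C ((A - B) ^ 2)) := by
  set q : K[X] := X ^ 4 - C (2 * (A + B)) * X ^ 2 + C ((A - B) ^ 2) with hq
  have hmon : q.Monic := by unfold q; monicity!
  have hdeg : q.natDegree = 4 := by unfold q; compute_degree!
  apply irred4 hmon hdeg
  · intro c hc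
    rw [hq] at hc
    simp only [eval_add, eval_sub, eval_mul, eval_pow, eval_X, eval_C] at hc
    apply hAB
    refine ⟨(c ^ 2 - (A + B)) / 2, ?_⟩
    field_simp
    ring_nf
    ring_nf at hc
    linear_combination -hc
  · intro a b c d hE
    have expand : (X ^ 2 + C a * X + C b) * (X ^ 2 + C c * X + C d)
        = X ^ 4 + C (a + c) * X ^ 3 + C (b + d + a * c) * X ^ 2
          + C (a * d + b * c) * X + C (b * d) := by
      simp only [C_add, C_mul]; ring
    rw [expand] at hE
    have lhs : q = X ^ 4 + C 0 * X ^ 3 + C (-(2 * (A + B))) * X ^ 2 + C 0 * X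
        + C ((A - B) ^ 2) := by
      rw [hq]; simp only [map_neg, map_zero]; ring
    rw [lhs] at hE
    have ecoeff : ∀ n : ℕ,
        (X ^ 4 + C 0 * X ^ 3 + C (-(2 * (A + B))) * X ^ 2 + C 0 * X
          + C ((A - B) ^ 2) : K[X]).coeff n
        = (X ^ 4 + C (a + c) * X ^ 3 + C (b + d + a * c) * X ^ 2 + C (a * d + b * c) * X
            + C (b * d) : K[X]).coeff n := fun n => by rw [hE]
    have e3 : (0 : K) = a + c := by
      have := ecoeff 3
      simp only [coeff_add, coeff_C_mul, coeff_X_pow, coeff_C, coeff_X] at this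
      norm_num at this
      first | exact this | exact this.symm | linear_combination this | linear_combination -this
    have e2 : -(2 * (A + B)) = b + d + a * c := by
      have := ecoeff 2
      simp only [coeff_add, coeff_C_mul, coeff_X_pow, coeff_C, coeff_X] at this
      norm_num at this
      first | exact this | exact this.symm | linear_combination this | linear_combination -this
    have e1 : (0 : K) = a * d + b * c := by
      have := ecoeff 1
      simp only [coeff_add, coeff_C_mul, coeff_X_pow, coeff_C, coeff_X] at this
      norm_num at this
      first | exact this | exact this.symm | linear_combination this | linear_combination -this
    have e0 : (A - B) ^ 2 = b * d := by
      have := ecoeff 0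
      simp only [coeff_add, coeff_C_mul, coeff_X_pow, coeff_C, coeff_X] at this
      norm_num at this
      first | exact this | exact this.symm | linear_combination this | linear_combination -this
    have hc : c = -a := by linear_combination -e3
    subst hc
    have key : a * (d - b) = 0 := by linear_combination -e1
    rcases mul_eq_zero.mp key with ha | hdb
    · -- a = 0 : (b - d)^2 = 16 A B
      apply hAB
      refine ⟨(b - d) / (2 * 2), ?_⟩
      subst ha
      field_simp
      first
      | linear_combination ((b + d) - 2 * (A + B)) * e2 - 4 * e0
      | linear_combination (2 * (A + B) - (b + d)) * e2 + 4 * e0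
    · have hb : (b - (A - B)) * (b + (A - B)) = 0 := by linear_combination -e0 - b * hdb
      rcases mul_eq_zero.mp hb with h' | h'
      · apply hA
        refine ⟨a / 2, ?_⟩
        field_simp
        first
        | linear_combination -e2 - 2 * h' - hdb
        | linear_combination e2 + 2 * h' + hdb
      · apply hB
        refine ⟨a / 2, ?_⟩
        field_simp
        first
        | linear_combination -e2 - 2 * h' - hdb
        | linear_combination e2 + 2 * h' + hdb

/-! ### Squarefree polynomials are not squares in the fraction field -/

private lemma aux_not_square {k : Type*} [Field k] {q : Polynomial k}
    (hq : Squarefree q) (hdeg : q.natDegree ≠ 0) :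
    ¬ IsSquare (algebraMap (Polynomial k) (FractionRing (Polynomial k)) q) := by
  rintro ⟨u, hu⟩
  have hint : IsIntegral (Polynomial k) u := by
    refine ⟨X ^ 2 - C q, ?_, ?_⟩
    · apply Polynomial.monic_X_pow_sub_C
      norm_num
    · simp only [eval₂_sub, eval₂_pow, eval₂_X, eval₂_C]
      rw [sq, ← hu, sub_self]
  obtain ⟨r, hr⟩ := IsIntegrallyClosed.isIntegral_iff.mp hint
  have heq : algebraMap (Polynomial k) (FractionRing (Polynomial k)) (r * r)
      = algebraMap (Polynomial k) (FractionRing (Polynomial k)) q := by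
    rw [map_mul, hr, ← hu]
  have hrr : r * r = q :=
    IsFractionRing.injective (Polynomial k) (FractionRing (Polynomial k)) heq
  have hunit : IsUnit r := hq r (hrr ▸ dvd_rfl)
  have hr0 : r ≠ 0 := hunit.ne_zero
  have : q.natDegree = 0 := by
    rw [← hrr, Polynomial.natDegree_mul hr0 hr0, Polynomial.natDegree_eq_zero_of_isUnit hunit]
  exact hdeg this

/-! ### Coprimality and separability of products of distinct linear factors -/

private lemma copC {k : Type*} [Field k] {a b : k} (h : a ≠ b) :
    IsCoprime (X - C a : k[X]) (X - C b) := by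
  have h0 : a - b ≠ 0 := sub_ne_zero.mpr h
  refine ⟨-C ((a - b)⁻¹), C ((a - b)⁻¹), ?_⟩
  calc -C ((a - b)⁻¹) * (X - C a) + C ((a - b)⁻¹) * (X - C b)
      = C ((a - b)⁻¹) * (C a - C b) := by ring
    _ = C ((a - b)⁻¹ * (a - b)) := by rw [← C_sub, ← C_mul]
    _ = 1 := by rw [inv_mul_cancel₀ h0, map_one]

private lemma sep4 {k : Type*} [Field k] {a b c d : k}
    (hab : a ≠ b) (hac : a ≠ c) (had : a ≠ d) (hbc : b ≠ c) (hbd : b ≠ d) (hcd : c ≠ d) :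
    ((X - C a) * (X - C b) * (X - C c) * (X - C d) : k[X]).Separable :=
  ((separable_X_sub_C.mul separable_X_sub_C (copC hab)).mul separable_X_sub_C
    ((copC hac).mul_left (copC hbc))).mul separable_X_sub_C
      (((copC had).mul_left (copC hbd)).mul_left (copC hcd))

private lemma deg4 {k : Type*} [Field k] (a b c d : k) :
    ((X - C a) * (X - C b) * (X - C c) * (X - C d) : k[X]).natDegree = 4 := by
  have h := fun x : k => Polynomial.X_sub_C_ne_zero (R := k) x
  rw [Polynomial.natDegree_mul (mul_ne_zero (mul_ne_zero (h a) (h b)) (h c)) (h d),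
    Polynomial.natDegree_mul (mul_ne_zero (h a) (h b)) (h c),
    Polynomial.natDegree_mul (h a) (h b)]
  simp

/-! ### The variable-swapping equivalence with `(k[x])[y]` -/

end Aux

open MvPolynomial

noncomputable def stmt5e1 (k : Type*) [Field k] : MvPolynomial (Fin 1) k ≃ₐ[k] Polynomial k :=
  (finSuccEquiv k 0).trans (Polynomial.mapAlgEquiv (isEmptyAlgEquiv k (Fin 0)))

noncomputable def stmt5e2 (k : Type*) [Field k] :
    MvPolynomial (Fin 2) k ≃ₐ[k] Polynomial (Polynomial k) :=
  (renameEquiv k (Equiv.swap 0 1)).trans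
    ((finSuccEquiv k 1).trans (Polynomial.mapAlgEquiv (stmt5e1 k)))

section E2
variable {k : Type*} [Field k]

private lemma stmt5e1_C (a : k) : stmt5e1 k (C a) = Polynomial.C a := by
  simp only [stmt5e1, AlgEquiv.trans_apply, finSuccEquiv_apply, eval₂Hom_C, RingHom.comp_apply,
    Polynomial.coe_mapAlgEquiv, Polynomial.map_C]
  simp [isEmptyAlgEquiv]
  exact (AddMonoidAlgebra.uniqueAlgEquiv k (Fin 0 →₀ ℕ)).commutes a

private lemma stmt5e1_X : stmt5e1 k (X 0) = Polynomial.X := by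
  simp only [stmt5e1, AlgEquiv.trans_apply, finSuccEquiv_X_zero, Polynomial.coe_mapAlgEquiv,
    Polynomial.map_X]

private lemma stmt5e2_X1 : stmt5e2 k (X 1) = Polynomial.X := by
  simp only [stmt5e2, AlgEquiv.trans_apply, renameEquiv_apply, rename_X,
    Equiv.swap_apply_right, finSuccEquiv_X_zero, Polynomial.coe_mapAlgEquiv,
    Polynomial.map_X]

private lemma stmt5e2_X0 : stmt5e2 k (X 0) = Polynomial.C Polynomial.X := by
  have h1 : ((1 : Fin 2)) = Fin.succ 0 := rfl
  simp only [stmt5e2, AlgEquiv.trans_apply, renameEquiv_apply, rename_X,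
    Equiv.swap_apply_left, h1, finSuccEquiv_X_succ, Polynomial.coe_mapAlgEquiv,
    Polynomial.map_C]
  exact congrArg Polynomial.C stmt5e1_X

private lemma stmt5e2_C (a : k) : stmt5e2 k (C a) = Polynomial.C (Polynomial.C a) := by
  simp only [stmt5e2, AlgEquiv.trans_apply, renameEquiv_apply, rename_C,
    finSuccEquiv_apply, eval₂Hom_C, RingHom.comp_apply, Polynomial.coe_mapAlgEquiv,
    Polynomial.map_C]
  exact congrArg Polynomial.C (stmt5e1_C a)

end E2

/-- The sextic f is absolutely irreducible for every choice of pairwise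
distinct roots. -/
theorem stmt_5
    {k : Type*} [Field k] [IsAlgClosed k]
    (p : ℕ) [CharP k p] (hp : p = 0 ∨ 5 ≤ p)
    (α1 α2 α3 α4 β1 β2 β3 β4 : k)
    (hdist : ([α1, α2, α3, α4, β1, β2, β3, β4] : List k).Pairwise (· ≠ ·))
    (φ1 φ2 f : MvPolynomial (Fin 2) k)
    (hφ1 : φ1 = (X 0 - C α1) * (X 0 - C α2) * (X 0 - C α3) * (X 0 - C α4))
    (hφ2 : φ2 = (X 0 - C β1) * (X 0 - C β2) * (X 0 - C β3) * (X 0 - C β4))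
    (hf : f = X 1 ^ 4 - C 2 * (φ1 + φ2) * X 1 ^ 2 + (φ1 - φ2) ^ 2) :
    Irreducible f := by
  classical
  -- extract the pairwise distinctness facts
  simp only [List.pairwise_cons, List.mem_cons, List.not_mem_nil, or_false,
    forall_eq_or_imp, forall_eq, List.Pairwise.nil, and_true, false_implies,
    implies_true, forall_const] at hdist
  obtain ⟨⟨h12, h13, h14, h15, h16, h17, h18⟩, ⟨h23, h24, h25, h26, h27, h28⟩,
    ⟨h34, h35, h36, h37, h38⟩, ⟨h45, h46, h47, h48⟩, ⟨h56, h57, h58⟩, ⟨h67, h68⟩, h78⟩ := hdist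
  -- characteristic facts
  have h2k : (2 : k) ≠ 0 := by
    rcases hp with rfl | hp5
    · haveI := CharP.charP_to_charZero k
      exact two_ne_zero
    · intro h
      have h2 : ((2 : ℕ) : k) = 0 := by exact_mod_cast h
      have := (CharP.cast_eq_zero_iff k p 2).mp h2
      have := Nat.le_of_dvd (by norm_num) this
      omega
  set R := Polynomial k
  set P1 : R := (Polynomial.X - Polynomial.C α1) * (Polynomial.X - Polynomial.C α2) *
    (Polynomial.X - Polynomial.C α3) * (Polynomial.X - Polynomial.C α4) with hP1
  set P2 : R := (Polynomial.X - Polynomial.C β1) * (Polynomial.X - Polynomial.C β2) *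
    (Polynomial.X - Polynomial.C β3) * (Polynomial.X - Polynomial.C β4) with hP2
  set F : Polynomial R := Polynomial.X ^ 4 - Polynomial.C (2 * (P1 + P2)) * Polynomial.X ^ 2
    + Polynomial.C ((P1 - P2) ^ 2) with hF
  -- the image of f under the swapping equivalence is F
  have himg : stmt5e2 k f = F := by
    rw [hf, hφ1, hφ2]
    simp only [map_add, map_sub, map_mul, map_pow, stmt5e2_X1, stmt5e2_X0, stmt5e2_C]
    rw [hF, hP1, hP2]
    simp only [map_mul, map_add, map_sub, map_pow, map_ofNat]
    try ring
  -- it suffices to prove F irreducible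
  suffices hFirr : Irreducible F by
    have : Irreducible (stmt5e2 k f) := himg ▸ hFirr
    exact (MulEquiv.irreducible_iff (stmt5e2 k).toMulEquiv).mp this
  -- squarefreeness and degrees
  have sfP1 : Squarefree P1 := (sep4 h12 h13 h14 h23 h24 h34).squarefree
  have sfP2 : Squarefree P2 := (sep4 h56 h57 h58 h67 h68 h78).squarefree
  have copP1P2 : IsCoprime P1 P2 := by
    have c1 : ∀ x : k, α1 ≠ x → α2 ≠ x → α3 ≠ x → α4 ≠ x →
        IsCoprime P1 (Polynomial.X - Polynomial.C x) := fun x hx1 hx2 hx3 hx4 =>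
      (((copC hx1).mul_left (copC hx2)).mul_left (copC hx3)).mul_left (copC hx4)
    exact ((((c1 β1 h15 h25 h35 h45).mul_right (c1 β2 h16 h26 h36 h46)).mul_right
      (c1 β3 h17 h27 h37 h47)).mul_right (c1 β4 h18 h28 h38 h48))
  have sfP12 : Squarefree (P1 * P2) :=
    ((sep4 h12 h13 h14 h23 h24 h34).mul (sep4 h56 h57 h58 h67 h68 h78) copP1P2).squarefree
  have dP1 : P1.natDegree = 4 := deg4 α1 α2 α3 α4
  have dP2 : P2.natDegree = 4 := deg4 β1 β2 β3 β4
  have hP10 : P1 ≠ 0 := sfP1.ne_zero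
  have hP20 : P2 ≠ 0 := sfP2.ne_zero
  have dP12 : (P1 * P2).natDegree = 8 := by
    rw [Polynomial.natDegree_mul hP10 hP20, dP1, dP2]
  -- F is monic, apply the Gauss lemma
  have hmonF : F.Monic := by unfold F; monicity!
  rw [Polynomial.Monic.irreducible_iff_irreducible_map_fraction_map hmonF
    (K := FractionRing R)]
  set K := FractionRing R
  set ψ := algebraMap R K with hψ
  have hmap : F.map ψ = Polynomial.X ^ 4 - Polynomial.C (2 * (ψ P1 + ψ P2)) * Polynomial.X ^ 2
      + Polynomial.C ((ψ P1 - ψ P2) ^ 2) := by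
    have hc1 : ψ (2 * (P1 + P2)) = 2 * (ψ P1 + ψ P2) := by
      rw [map_mul, map_add, map_ofNat]
    have hc2 : ψ ((P1 - P2) ^ 2) = (ψ P1 - ψ P2) ^ 2 := by
      rw [map_pow, map_sub]
    rw [hF]
    simp only [Polynomial.map_add, Polynomial.map_sub, Polynomial.map_mul, Polynomial.map_pow,
      Polynomial.map_X, Polynomial.map_C, hc1, hc2]
  rw [hmap]
  -- the three non-square facts
  have h2R : (2 : R) ≠ 0 := by
    intro h
    apply h2k
    have := congrArg (Polynomial.eval 0) h
    simpa using this
  have h2K : (2 : K) ≠ 0 := by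
    intro h
    apply h2R
    have h2 : ψ 2 = 0 := by rw [map_ofNat]; exact h
    exact IsFractionRing.injective R K (by rw [h2, map_zero])
  have hA : ¬IsSquare (ψ P1) := aux_not_square sfP1 (by omega)
  have hB : ¬IsSquare (ψ P2) := aux_not_square sfP2 (by omega)
  have hAB : ¬IsSquare (ψ P1 * ψ P2) := by
    rw [← map_mul]
    exact aux_not_square sfP12 (by omega)
  exact irredF (ψ P1) (ψ P2) h2K hA hB hAB
end

section
/- The only points at infinity of ℙ²(k) (i.e., of the form (x:y:0)) lying in Sing are (0:1:0) and (1:0:0). The point (0:1:0) always belongs to Sing, while (1:0:0) belongs to Sing if and only if σ1 = τ1, i.e., α1+α2+α3+α4 = β1+β2+β3+β4. -/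
open MvPolynomial

lemma aux_eval_smul {k : Type*} [CommSemiring k] {σ : Type*} {n : ℕ}
    {P : MvPolynomial σ k} (h : P.IsHomogeneous n) (c : k) (v : σ → k) :
    eval (c • v) P = c ^ n * eval v P := by
  rw [eval_eq, eval_eq, Finset.mul_sum]
  refine Finset.sum_congr rfl fun d hd => ?_
  have hdeg := h (mem_support_iff.mp hd)
  have : ∏ i ∈ d.support, (c • v) i ^ d i
      = c ^ n * ∏ i ∈ d.support, v i ^ d i := by
    simp only [Pi.smul_apply, smul_eq_mul, mul_pow]
    rw [Finset.prod_mul_distrib, Finset.prod_pow_eq_pow_sum]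
    congr 1
    rw [← hdeg]; simp [Finsupp.weight_apply, Finsupp.sum]
  rw [this]; ring

lemma aux_eval_aeval1 {k : Type*} [CommSemiring k] (P : MvPolynomial (Fin 3) k)
    (x y : k) :
    eval ![x, y] (aeval ![(X 0 : MvPolynomial (Fin 2) k), X 1, 1] P) = eval ![x, y, 1] P := by
  induction P using MvPolynomial.induction_on with
  | C a => simp
  | add p q hp hq => simp only [map_add, hp, hq]
  | mul_X p i hp => rw [map_mul, aeval_X, map_mul, map_mul, hp]
                    fin_cases i <;> simp

lemma aux_eval_aevalP {k : Type*} [CommSemiring k] (P : MvPolynomial (Fin 3) k)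
    (x y t : k) :
    Polynomial.eval t (aeval ![(Polynomial.C x : Polynomial k), Polynomial.C y, Polynomial.X] P)
      = eval ![x, y, t] P := by
  induction P using MvPolynomial.induction_on with
  | C a => simp
  | add p q hp hq => simp only [map_add, Polynomial.eval_add, hp, hq]
  | mul_X p i hp => rw [map_mul, aeval_X, Polynomial.eval_mul, map_mul, hp]
                    fin_cases i <;> simp

lemma aux_uniq {k : Type*} [Field k] [Infinite k] {F G : MvPolynomial (Fin 3) k}
    (hF : F.IsHomogeneous 6) (hG : G.IsHomogeneous 6)
    (h : aeval ![(X 0 : MvPolynomial (Fin 2) k), X 1, 1] F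
       = aeval ![(X 0 : MvPolynomial (Fin 2) k), X 1, 1] G) : F = G := by
  have hD : (F - G).IsHomogeneous 6 := hF.sub hG
  rw [← sub_eq_zero]
  apply hD.eq_zero_of_forall_eval_eq_zero
  intro v
  have hv : v = ![v 0, v 1, v 2] := by
    funext i; fin_cases i <;> rfl
  have haev : aeval ![(X 0 : MvPolynomial (Fin 2) k), X 1, 1] (F - G) = 0 := by
    rw [map_sub, h, sub_self]
  set q : Polynomial k :=
    aeval ![(Polynomial.C (v 0) : Polynomial k), Polynomial.C (v 1), Polynomial.X] (F - G) with hq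
  have hroot : ∀ t : k, t ≠ 0 → q.eval t = 0 := by
    intro t ht
    rw [hq, aux_eval_aevalP]
    have hsc : (![v 0, v 1, t] : Fin 3 → k) = t • ![v 0 / t, v 1 / t, 1] := by
      funext i; fin_cases i <;> simp <;> field_simp
    rw [hsc, aux_eval_smul hD, ← aux_eval_aeval1, haev, map_zero, mul_zero]
  have hq0 : q = 0 := by
    apply Polynomial.eq_zero_of_infinite_isRoot
    apply Set.Infinite.mono (s := {t : k | t ≠ 0})
    · intro t ht; exact hroot t ht
    · exact (Set.finite_singleton (0 : k)).infinite_compl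
  have := aux_eval_aevalP (F - G) (v 0) (v 1) (v 2)
  rw [← hq, hq0, Polynomial.eval_zero] at this
  rw [hv]; exact this.symm

lemma aux_pd2 {k : Type*} [Field k] (i : Fin 3) :
    pderiv i ((2 : MvPolynomial (Fin 3) k)) = 0 := by
  rw [← map_ofNat (C : k →+* MvPolynomial (Fin 3) k) 2, pderiv_C]

lemma aux_ev2 {k : Type*} [Field k] (v : Fin 3 → k) :
    eval v ((2 : MvPolynomial (Fin 3) k)) = 2 := by
  rw [← map_ofNat (C : k →+* MvPolynomial (Fin 3) k) 2, eval_C]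

noncomputable def Phi1 {k : Type*} [Field k] (a1 a2 a3 a4 : k) : MvPolynomial (Fin 3) k :=
  (X 0 - C a1 * X 2) * (X 0 - C a2 * X 2) * (X 0 - C a3 * X 2) * (X 0 - C a4 * X 2)

noncomputable def Dpol {k : Type*} [Field k] (a1 a2 a3 a4 b1 b2 b3 b4 : k) :
    MvPolynomial (Fin 3) k :=
  C ((b1 + b2 + b3 + b4) - (a1 + a2 + a3 + a4)) * X 0 ^ 3
  + C ((a1*a2 + a1*a3 + a1*a4 + a2*a3 + a2*a4 + a3*a4)
      - (b1*b2 + b1*b3 + b1*b4 + b2*b3 + b2*b4 + b3*b4)) * X 0 ^ 2 * X 2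
  + C ((b1*b2*b3 + b1*b2*b4 + b1*b3*b4 + b2*b3*b4)
      - (a1*a2*a3 + a1*a2*a4 + a1*a3*a4 + a2*a3*a4)) * X 0 * X 2 ^ 2
  + C (a1*a2*a3*a4 - b1*b2*b3*b4) * X 2 ^ 3

noncomputable def Gpol {k : Type*} [Field k] (a1 a2 a3 a4 b1 b2 b3 b4 : k) :
    MvPolynomial (Fin 3) k :=
  X 1 ^ 4 * X 2 ^ 2 - C 2 * (Phi1 a1 a2 a3 a4 + Phi1 b1 b2 b3 b4) * X 1 ^ 2
  + (Dpol a1 a2 a3 a4 b1 b2 b3 b4) ^ 2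

lemma Gpol_isHomogeneous {k : Type*} [Field k] (a1 a2 a3 a4 b1 b2 b3 b4 : k) :
    (Gpol a1 a2 a3 a4 b1 b2 b3 b4).IsHomogeneous 6 := by
  have hphi : ∀ c1 c2 c3 c4 : k, (Phi1 c1 c2 c3 c4).IsHomogeneous 4 := by
    intro c1 c2 c3 c4
    have h : ∀ c : k, ((X 0 - C c * X 2) : MvPolynomial (Fin 3) k).IsHomogeneous 1 :=
      fun c => (isHomogeneous_X _ _).sub ((isHomogeneous_C _ _).mul (isHomogeneous_X _ _))
    exact (((h c1).mul (h c2)).mul (h c3)).mul (h c4)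
  have hD : (Dpol a1 a2 a3 a4 b1 b2 b3 b4).IsHomogeneous 3 := by
    unfold Dpol
    refine (((?_ : IsHomogeneous _ 3).add ?_).add ?_).add ?_
    · exact (isHomogeneous_C _ _).mul (isHomogeneous_X_pow _ _)
    · exact ((isHomogeneous_C _ _).mul (isHomogeneous_X_pow _ _)).mul (isHomogeneous_X _ _)
    · exact ((isHomogeneous_C _ _).mul (isHomogeneous_X _ _)).mul (isHomogeneous_X_pow _ _)
    · exact (isHomogeneous_C _ _).mul (isHomogeneous_X_pow _ _)
  refine IsHomogeneous.add (IsHomogeneous.sub ?_ ?_) (hD.pow 2)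
  · exact (isHomogeneous_X_pow _ _).mul (isHomogeneous_X_pow _ _)
  · exact ((isHomogeneous_C _ _).mul ((hphi a1 a2 a3 a4).add (hphi b1 b2 b3 b4))).mul
      (isHomogeneous_X_pow _ _)

lemma Gpol_aeval {k : Type*} [Field k] (a1 a2 a3 a4 b1 b2 b3 b4 : k)
    (φ1 φ2 : MvPolynomial (Fin 2) k)
    (hφ1 : φ1 = (X 0 - C a1) * (X 0 - C a2) * (X 0 - C a3) * (X 0 - C a4))
    (hφ2 : φ2 = (X 0 - C b1) * (X 0 - C b2) * (X 0 - C b3) * (X 0 - C b4)) :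
    aeval ![(X 0 : MvPolynomial (Fin 2) k), X 1, 1] (Gpol a1 a2 a3 a4 b1 b2 b3 b4)
    = X 1 ^ 4 - C 2 * (φ1 + φ2) * X 1 ^ 2 + (φ1 - φ2) ^ 2 := by
  have hD : aeval ![(X 0 : MvPolynomial (Fin 2) k), X 1, 1] (Dpol a1 a2 a3 a4 b1 b2 b3 b4)
      = φ1 - φ2 := by
    rw [hφ1, hφ2]
    simp only [Dpol, map_add, map_sub, map_mul, map_pow, aeval_X, aeval_C,
      Matrix.cons_val_zero, Matrix.cons_val_two, Matrix.tail_cons, Matrix.head_cons,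
      algebraMap_eq, map_one, one_pow, mul_one]
    ring
  have hP1 : aeval ![(X 0 : MvPolynomial (Fin 2) k), X 1, 1] (Phi1 a1 a2 a3 a4) = φ1 := by
    rw [hφ1]; simp [Phi1, algebraMap_eq]
  have hP2 : aeval ![(X 0 : MvPolynomial (Fin 2) k), X 1, 1] (Phi1 b1 b2 b3 b4) = φ2 := by
    rw [hφ2]; simp [Phi1, algebraMap_eq]
  simp only [Gpol, map_add, map_sub, map_mul, map_pow, aeval_X, hD, hP1, hP2, aeval_C,
    Matrix.cons_val_zero, Matrix.cons_val_one, Matrix.cons_val_two, Matrix.tail_cons,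
    Matrix.head_cons, algebraMap_eq, map_one, one_pow, mul_one]

lemma Gpol_eval0 {k : Type*} [Field k] (a1 a2 a3 a4 b1 b2 b3 b4 u w : k) :
    eval ![u, w, 0] (Gpol a1 a2 a3 a4 b1 b2 b3 b4)
    = ((b1+b2+b3+b4) - (a1+a2+a3+a4))^2 * u^6 - 4*u^4*w^2 := by
  simp only [Gpol, Phi1, Dpol, map_add, map_sub, map_mul, map_pow, eval_X, eval_C,
    Matrix.cons_val_zero, Matrix.cons_val_one, Matrix.cons_val_two, Matrix.tail_cons,
    Matrix.head_cons, map_one, map_ofNat]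
  ring

set_option maxHeartbeats 1000000 in
lemma Gpol_pd0 {k : Type*} [Field k] (a1 a2 a3 a4 b1 b2 b3 b4 u w : k) :
    eval ![u, w, 0] (pderiv 0 (Gpol a1 a2 a3 a4 b1 b2 b3 b4))
    = 6*((b1+b2+b3+b4) - (a1+a2+a3+a4))^2*u^5 - 16*u^3*w^2 := by
  simp only [Gpol, Phi1, Dpol, map_add, map_sub, pderiv_mul, pderiv_pow, pderiv_C,
    pderiv_X, Pi.single_eq_same, Pi.single_eq_of_ne (by decide : (1:Fin 3) ≠ 0),
    Pi.single_eq_of_ne (by decide : (2:Fin 3) ≠ 0), aux_pd2, aux_ev2, map_natCast,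
    Nat.cast_ofNat, map_ofNat, map_mul, map_pow, eval_X, eval_C, Matrix.cons_val_zero,
    Matrix.cons_val_one, Matrix.cons_val_two, Matrix.tail_cons, Matrix.head_cons, map_one,
    map_zero]
  ring

set_option maxHeartbeats 1000000 in
lemma Gpol_pd1 {k : Type*} [Field k] (a1 a2 a3 a4 b1 b2 b3 b4 u w : k) :
    eval ![u, w, 0] (pderiv 1 (Gpol a1 a2 a3 a4 b1 b2 b3 b4))
    = -(8 * u^4 * w) := by
  simp only [Gpol, Phi1, Dpol, map_add, map_sub, pderiv_mul, pderiv_pow, pderiv_C,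
    pderiv_X, Pi.single_eq_same, Pi.single_eq_of_ne (by decide : (0:Fin 3) ≠ 1),
    Pi.single_eq_of_ne (by decide : (2:Fin 3) ≠ 1), aux_pd2, aux_ev2, map_natCast,
    Nat.cast_ofNat, map_ofNat, map_mul, map_pow, eval_X, eval_C, Matrix.cons_val_zero,
    Matrix.cons_val_one, Matrix.cons_val_two, Matrix.tail_cons, Matrix.head_cons, map_one,
    map_zero]
  ring

set_option maxHeartbeats 1000000 in
lemma Gpol_pd2 {k : Type*} [Field k] (a1 a2 a3 a4 b1 b2 b3 b4 u w : k) :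
    eval ![u, w, 0] (pderiv 2 (Gpol a1 a2 a3 a4 b1 b2 b3 b4))
    = 2*((a1+a2+a3+a4) + (b1+b2+b3+b4))*u^3*w^2
      + 2*((b1+b2+b3+b4) - (a1+a2+a3+a4))
        * ((a1*a2+a1*a3+a1*a4+a2*a3+a2*a4+a3*a4) - (b1*b2+b1*b3+b1*b4+b2*b3+b2*b4+b3*b4))*u^5 := by
  simp only [Gpol, Phi1, Dpol, map_add, map_sub, pderiv_mul, pderiv_pow, pderiv_C,
    pderiv_X, Pi.single_eq_same, Pi.single_eq_of_ne (by decide : (0:Fin 3) ≠ 2),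
    Pi.single_eq_of_ne (by decide : (1:Fin 3) ≠ 2), aux_pd2, aux_ev2, map_natCast,
    Nat.cast_ofNat, map_ofNat, map_mul, map_pow, eval_X, eval_C, Matrix.cons_val_zero,
    Matrix.cons_val_one, Matrix.cons_val_two, Matrix.tail_cons, Matrix.head_cons, map_one,
    map_zero]
  ring
/-- The only singular points of the projective sextic F = 0 at infinity are
(0:1:0) and (1:0:0); the point (0:1:0) is always singular, and (1:0:0) is
singular if and only if σ1 = τ1. -/
theorem stmt_6
    {k : Type*} [Field k] [IsAlgClosed k]
    (p : ℕ) [CharP k p] (hp : p = 0 ∨ 5 ≤ p)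
    (α1 α2 α3 α4 β1 β2 β3 β4 : k)
    (hdist : ([α1, α2, α3, α4, β1, β2, β3, β4] : List k).Pairwise (· ≠ ·))
    (σ1 σ2 σ3 σ4 τ1 τ2 τ3 τ4 : k)
    (hσ1 : σ1 = α1 + α2 + α3 + α4)
    (hσ2 : σ2 = α1 * α2 + α1 * α3 + α1 * α4 + α2 * α3 + α2 * α4 + α3 * α4)
    (hσ3 : σ3 = α1 * α2 * α3 + α1 * α2 * α4 + α1 * α3 * α4 + α2 * α3 * α4)
    (hσ4 : σ4 = α1 * α2 * α3 * α4)
    (hτ1 : τ1 = β1 + β2 + β3 + β4)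
    (hτ2 : τ2 = β1 * β2 + β1 * β3 + β1 * β4 + β2 * β3 + β2 * β4 + β3 * β4)
    (hτ3 : τ3 = β1 * β2 * β3 + β1 * β2 * β4 + β1 * β3 * β4 + β2 * β3 * β4)
    (hτ4 : τ4 = β1 * β2 * β3 * β4)
    (φ1 φ2 f : MvPolynomial (Fin 2) k)
    (hφ1 : φ1 = (X 0 - C α1) * (X 0 - C α2) * (X 0 - C α3) * (X 0 - C α4))
    (hφ2 : φ2 = (X 0 - C β1) * (X 0 - C β2) * (X 0 - C β3) * (X 0 - C β4))
    (hf : f = X 1 ^ 4 - C 2 * (φ1 + φ2) * X 1 ^ 2 + (φ1 - φ2) ^ 2)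
    (F : MvPolynomial (Fin 3) k)
    (hFhom : F.IsHomogeneous 6)
    (hFf : aeval ![(X 0 : MvPolynomial (Fin 2) k), X 1, 1] F = f)
    (Sing : Set (Projectivization k (Fin 3 → k)))
    (hSing : ∀ P : Projectivization k (Fin 3 → k),
      P ∈ Sing ↔ (eval P.rep F = 0 ∧
        eval P.rep (pderiv 0 F) = 0 ∧
        eval P.rep (pderiv 1 F) = 0 ∧
        eval P.rep (pderiv 2 F) = 0)) :
    (∀ (x y : k) (h : (![x, y, 0] : Fin 3 → k) ≠ 0),
      Projectivization.mk k (![x, y, 0] : Fin 3 → k) h ∈ Sing →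
        Projectivization.mk k (![x, y, 0] : Fin 3 → k) h
          = Projectivization.mk k (![0, 1, 0] : Fin 3 → k)
              (by intro hc; simpa using congrFun hc 1) ∨
        Projectivization.mk k (![x, y, 0] : Fin 3 → k) h
          = Projectivization.mk k (![1, 0, 0] : Fin 3 → k)
              (by intro hc; simpa using congrFun hc 0))
    ∧ Projectivization.mk k (![0, 1, 0] : Fin 3 → k)
        (by intro hc; simpa using congrFun hc 1) ∈ Sing
    ∧ (Projectivization.mk k (![1, 0, 0] : Fin 3 → k)
        (by intro hc; simpa using congrFun hc 0) ∈ Sing ↔ σ1 = τ1) := by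
  haveI : Infinite k := inferInstance
  subst hσ1 hσ2 hσ3 hσ4 hτ1 hτ2 hτ3 hτ4
  have hFG : F = Gpol α1 α2 α3 α4 β1 β2 β3 β4 := by
    refine aux_uniq hFhom (Gpol_isHomogeneous _ _ _ _ _ _ _ _) ?_
    rw [hFf, Gpol_aeval _ _ _ _ _ _ _ _ φ1 φ2 hφ1 hφ2]
    exact hf
  subst hFG
  have h8 : (8 : k) ≠ 0 := by
    rcases hp with hp | hp
    · subst hp
      haveI : CharZero k := CharP.charP_to_charZero k
      norm_num
    · have hprime : p.Prime := by
        rcases CharP.char_is_prime_or_zero k p with h | h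
        · exact h
        · omega
      intro h80
      rw [show (8:k) = ((8:ℕ):k) by norm_num, CharP.cast_eq_zero_iff k p] at h80
      have hdvd : p ∣ 2 ^ 3 := by simpa using h80
      have := (Nat.prime_dvd_prime_iff_eq hprime Nat.prime_two).mp (hprime.dvd_of_dvd_pow hdvd)
      omega
  refine ⟨?_, ?_, ?_⟩
  · intro x y h hmem
    rw [hSing] at hmem
    obtain ⟨a, ha⟩ := Projectivization.exists_smul_eq_mk_rep k ![x, y, 0] h
    have hrep : (Projectivization.mk k ![x, y, 0] h).rep = ![(a:k)*x, (a:k)*y, 0] := by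
      rw [← ha]; funext i; fin_cases i <;> simp [Units.smul_def]
    obtain ⟨h0, h1, h2, h3⟩ := hmem
    rw [hrep, Gpol_pd1] at h2
    have hxy : x = 0 ∨ y = 0 := by
      have ha0 : (a:k) ≠ 0 := a.ne_zero
      rcases mul_eq_zero.mp (neg_eq_zero.mp h2) with h' | h'
      · rcases mul_eq_zero.mp h' with h'' | h''
        · exact absurd h'' h8
        · left
          have := (pow_eq_zero_iff (n := 4) (by norm_num)).mp h''
          rcases mul_eq_zero.mp this with h3' | h3'
          · exact absurd h3' ha0
          · exact h3'
      · rcases mul_eq_zero.mp h' with h3' | h3'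
        · exact absurd h3' ha0
        · right; exact h3'
    rcases hxy with rfl | rfl
    · left
      have hy : y ≠ 0 := by
        intro h0'; apply h; funext i; fin_cases i <;> simp [h0']
      rw [Projectivization.mk_eq_mk_iff]
      exact ⟨Units.mk0 y hy, by funext i; fin_cases i <;> simp [Units.smul_def]⟩
    · right
      have hx : x ≠ 0 := by
        intro h0'; apply h; funext i; fin_cases i <;> simp [h0']
      rw [Projectivization.mk_eq_mk_iff]
      exact ⟨Units.mk0 x hx, by funext i; fin_cases i <;> simp [Units.smul_def]⟩
  · rw [hSing]
    obtain ⟨a, ha⟩ := Projectivization.exists_smul_eq_mk_rep k (![0, 1, 0] : Fin 3 → k)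
      (by intro hc; simpa using congrFun hc 1)
    have hrep : (Projectivization.mk k (![0, 1, 0] : Fin 3 → k)
        (by intro hc; simpa using congrFun hc 1)).rep = ![0, (a:k), 0] := by
      rw [← ha]; funext i; fin_cases i <;> simp [Units.smul_def]
    refine ⟨?_, ?_, ?_, ?_⟩
    · rw [hrep, Gpol_eval0]; norm_num
    · rw [hrep, Gpol_pd0]; norm_num
    · rw [hrep, Gpol_pd1]; norm_num
    · rw [hrep, Gpol_pd2]; norm_num
  · obtain ⟨a, ha⟩ := Projectivization.exists_smul_eq_mk_rep k (![1, 0, 0] : Fin 3 → k)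
      (by intro hc; simpa using congrFun hc 0)
    have hrep : (Projectivization.mk k (![1, 0, 0] : Fin 3 → k)
        (by intro hc; simpa using congrFun hc 0)).rep = ![(a:k), 0, 0] := by
      rw [← ha]; funext i; fin_cases i <;> simp [Units.smul_def]
    constructor
    · intro hmem
      rw [hSing] at hmem
      obtain ⟨h0, -, -, -⟩ := hmem
      rw [hrep, Gpol_eval0] at h0
      have e : ((β1+β2+β3+β4) - (α1+α2+α3+α4))^2 * (a:k)^6 = 0 := by
        linear_combination h0
      rcases mul_eq_zero.mp e with hs | hA
      · have := (pow_eq_zero_iff (n := 2) (by norm_num)).mp hs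
        linear_combination -this
      · exact absurd ((pow_eq_zero_iff (n := 6) (by norm_num)).mp hA) a.ne_zero
    · intro hEq
      rw [hSing]
      have hs : (β1+β2+β3+β4) - (α1+α2+α3+α4) = 0 := by linear_combination -hEq
      refine ⟨?_, ?_, ?_, ?_⟩
      · rw [hrep, Gpol_eval0, hs]; norm_num
      · rw [hrep, Gpol_pd0, hs]; norm_num
      · rw [hrep, Gpol_pd1]; norm_num
      · rw [hrep, Gpol_pd2, hs]; norm_num
end

section
/- At each of the singular points (0:1:0) and (1:0:0) (the latter when it lies in Sing) the curve F = 0 has multiplicity exactly 2; concretely, the second-order partial derivative F_zz does not vanish at (0:1:0), and F_yy does not vanish at (1:0:0). -/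
open MvPolynomial

section StmtAux

lemma stmt7_aux_eval_smul {k : Type*} [CommSemiring k] {σ : Type*} {n : ℕ} {P : MvPolynomial σ k}
    (h : P.IsHomogeneous n) (c : k) (v : σ → k) :
    eval (fun i => c * v i) P = c ^ n * eval v P := by
  rw [eval_eq, eval_eq, Finset.mul_sum]
  refine Finset.sum_congr rfl fun d hd => ?_
  have hdeg : d.degree = n := by
    by_contra hne
    exact (mem_support_iff.mp hd) (h.coeff_eq_zero hne)
  rw [← hdeg, Finsupp.degree_apply]
  simp_rw [mul_pow]
  rw [Finset.prod_mul_distrib, Finset.prod_pow_eq_pow_sum]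
  ring

lemma stmt7_aux_eval_dehom {k : Type*} [CommSemiring k] (F : MvPolynomial (Fin 3) k) (a b : k) :
    eval ![a, b] (aeval ![(X 0 : MvPolynomial (Fin 2) k), X 1, 1] F) = eval ![a, b, (1:k)] F := by
  rw [aeval_def, eval_eval₂]
  have h1 : ((eval ![a,b]).comp (algebraMap k (MvPolynomial (Fin 2) k))) = RingHom.id k := by
    ext r; simp [algebraMap_eq]
  have h2 : (fun s => eval ![a,b] (![(X 0 : MvPolynomial (Fin 2) k), X 1, 1] s)) = ![a,b,(1:k)] := by
    funext i; fin_cases i <;> simp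
  rw [h1, h2, eval₂_id]

noncomputable def stmt7Phi {k : Type*} [CommRing k] (a1 a2 a3 a4 : k) : MvPolynomial (Fin 3) k :=
  (X 0 - C a1 * X 2) * (X 0 - C a2 * X 2) * (X 0 - C a3 * X 2) * (X 0 - C a4 * X 2)

lemma stmt7_lin_hom {k : Type*} [CommRing k] (a : k) :
    ((X 0 : MvPolynomial (Fin 3) k) - C a * X 2).IsHomogeneous 1 :=
  (isHomogeneous_X k 0).sub (by simpa using (isHomogeneous_C (Fin 3) a).mul (isHomogeneous_X k 2))

lemma stmt7Phi_hom {k : Type*} [CommRing k] (a1 a2 a3 a4 : k) :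
    (stmt7Phi a1 a2 a3 a4).IsHomogeneous 4 := by
  have := (((stmt7_lin_hom a1).mul (stmt7_lin_hom a2)).mul (stmt7_lin_hom a3)).mul (stmt7_lin_hom a4)
  simpa [stmt7Phi] using this

noncomputable def stmt7G {k : Type*} [CommRing k] (a1 a2 a3 a4 b1 b2 b3 b4 : k) :
    MvPolynomial (Fin 3) k :=
  C (b1 + b2 + b3 + b4 - a1 - a2 - a3 - a4) * X 0 ^ 3
  + C (a1*a2 + a1*a3 + a1*a4 + a2*a3 + a2*a4 + a3*a4
       - b1*b2 - b1*b3 - b1*b4 - b2*b3 - b2*b4 - b3*b4) * X 0 ^ 2 * X 2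
  + C (b1*b2*b3 + b1*b2*b4 + b1*b3*b4 + b2*b3*b4
       - a1*a2*a3 - a1*a2*a4 - a1*a3*a4 - a2*a3*a4) * X 0 * X 2 ^ 2
  + C (a1*a2*a3*a4 - b1*b2*b3*b4) * X 2 ^ 3

set_option maxHeartbeats 1000000 in
lemma stmt7G_hom {k : Type*} [CommRing k] (a1 a2 a3 a4 b1 b2 b3 b4 : k) :
    (stmt7G a1 a2 a3 a4 b1 b2 b3 b4).IsHomogeneous 3 := by
  unfold stmt7G
  have hX0 := isHomogeneous_X (R := k) (σ := Fin 3) 0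
  have hX2 := isHomogeneous_X (R := k) (σ := Fin 3) 2
  have h1 := (isHomogeneous_C (Fin 3) (b1 + b2 + b3 + b4 - a1 - a2 - a3 - a4)).mul (hX0.pow 3)
  have h2 := ((isHomogeneous_C (Fin 3) (a1*a2 + a1*a3 + a1*a4 + a2*a3 + a2*a4 + a3*a4
       - b1*b2 - b1*b3 - b1*b4 - b2*b3 - b2*b4 - b3*b4)).mul (hX0.pow 2)).mul hX2
  have h3 := ((isHomogeneous_C (Fin 3) (b1*b2*b3 + b1*b2*b4 + b1*b3*b4 + b2*b3*b4
       - a1*a2*a3 - a1*a2*a4 - a1*a3*a4 - a2*a3*a4)).mul hX0).mul (hX2.pow 2)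
  have h4 := (isHomogeneous_C (Fin 3) (a1*a2*a3*a4 - b1*b2*b3*b4)).mul (hX2.pow 3)
  simp only [zero_add, one_mul, Nat.reduceAdd] at h1 h2 h3 h4
  exact ((h1.add h2).add h3).add h4

noncomputable def stmt7F0 {k : Type*} [CommRing k] (a1 a2 a3 a4 b1 b2 b3 b4 : k) :
    MvPolynomial (Fin 3) k :=
  X 1 ^ 4 * X 2 ^ 2 - C 2 * (stmt7Phi a1 a2 a3 a4 + stmt7Phi b1 b2 b3 b4) * X 1 ^ 2
    + stmt7G a1 a2 a3 a4 b1 b2 b3 b4 ^ 2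

lemma stmt7F0_hom {k : Type*} [CommRing k] (a1 a2 a3 a4 b1 b2 b3 b4 : k) :
    (stmt7F0 a1 a2 a3 a4 b1 b2 b3 b4).IsHomogeneous 6 := by
  unfold stmt7F0
  have t1 := ((isHomogeneous_X k (1 : Fin 3)).pow 4).mul ((isHomogeneous_X k (2 : Fin 3)).pow 2)
  have t2 := ((isHomogeneous_C (Fin 3) (2:k)).mul
    ((stmt7Phi_hom a1 a2 a3 a4).add (stmt7Phi_hom b1 b2 b3 b4))).mul
    ((isHomogeneous_X k (1 : Fin 3)).pow 2)
  have t3 := (stmt7G_hom a1 a2 a3 a4 b1 b2 b3 b4).pow 2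
  simp only [zero_add, one_mul, Nat.reduceAdd, Nat.reduceMul] at t1 t2 t3
  exact (t1.sub t2).add t3

set_option maxHeartbeats 1000000 in
lemma stmt7F0_dehom {k : Type*} [CommRing k] (a1 a2 a3 a4 b1 b2 b3 b4 : k) :
    aeval ![(X 0 : MvPolynomial (Fin 2) k), X 1, 1] (stmt7F0 a1 a2 a3 a4 b1 b2 b3 b4) =
      X 1 ^ 4 - C 2 * (((X 0 - C a1) * (X 0 - C a2) * (X 0 - C a3) * (X 0 - C a4))
        + ((X 0 - C b1) * (X 0 - C b2) * (X 0 - C b3) * (X 0 - C b4))) * X 1 ^ 2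
      + (((X 0 - C a1) * (X 0 - C a2) * (X 0 - C a3) * (X 0 - C a4))
        - ((X 0 - C b1) * (X 0 - C b2) * (X 0 - C b3) * (X 0 - C b4))) ^ 2 := by
  unfold stmt7F0 stmt7Phi stmt7G
  simp only [map_add, map_sub, map_mul, map_pow, map_one, aeval_X, aeval_C,
    Matrix.cons_val_zero, Matrix.cons_val_one, Matrix.head_cons, Matrix.cons_val_two,
    Matrix.tail_cons, algebraMap_eq]
  ring

set_option maxHeartbeats 2000000 in
lemma stmt7F0_eval1 {k : Type*} [CommRing k] (a1 a2 a3 a4 b1 b2 b3 b4 : k) :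
    eval ![0,1,0] (pderiv 2 (pderiv 2 (stmt7F0 a1 a2 a3 a4 b1 b2 b3 b4))) = 2 := by
  unfold stmt7F0 stmt7Phi stmt7G
  simp [pderiv_mul, pderiv_pow]

set_option maxHeartbeats 2000000 in
lemma stmt7F0_eval2 {k : Type*} [CommRing k] (a1 a2 a3 a4 b1 b2 b3 b4 : k) :
    eval ![1,0,0] (pderiv 1 (pderiv 1 (stmt7F0 a1 a2 a3 a4 b1 b2 b3 b4))) = -8 := by
  unfold stmt7F0 stmt7Phi stmt7G
  simp [pderiv_mul, pderiv_pow]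
  ring

end StmtAux

/-- The singular points (0:1:0) and (1:0:0) of the projective sextic F = 0 have
multiplicity exactly 2: F_zz does not vanish at (0:1:0) and F_yy does not
vanish at (1:0:0). -/
theorem stmt_7
    {k : Type*} [Field k] [IsAlgClosed k]
    (p : ℕ) [CharP k p] (hp : p = 0 ∨ 5 ≤ p)
    (α1 α2 α3 α4 β1 β2 β3 β4 : k)
    (hdist : ([α1, α2, α3, α4, β1, β2, β3, β4] : List k).Pairwise (· ≠ ·))
    (φ1 φ2 f : MvPolynomial (Fin 2) k)
    (hφ1 : φ1 = (X 0 - C α1) * (X 0 - C α2) * (X 0 - C α3) * (X 0 - C α4))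
    (hφ2 : φ2 = (X 0 - C β1) * (X 0 - C β2) * (X 0 - C β3) * (X 0 - C β4))
    (hf : f = X 1 ^ 4 - C 2 * (φ1 + φ2) * X 1 ^ 2 + (φ1 - φ2) ^ 2)
    (F : MvPolynomial (Fin 3) k)
    (hFhom : F.IsHomogeneous 6)
    (hFf : aeval ![(X 0 : MvPolynomial (Fin 2) k), X 1, 1] F = f)
    (Sing : Set (Projectivization k (Fin 3 → k)))
    (hSing : ∀ P : Projectivization k (Fin 3 → k),
      P ∈ Sing ↔ (eval P.rep F = 0 ∧
        eval P.rep (pderiv 0 F) = 0 ∧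
        eval P.rep (pderiv 1 F) = 0 ∧
        eval P.rep (pderiv 2 F) = 0)) :
    eval (![0, 1, 0] : Fin 3 → k) (pderiv 2 (pderiv 2 F)) ≠ 0
    ∧ eval (![1, 0, 0] : Fin 3 → k) (pderiv 1 (pderiv 1 F)) ≠ 0 := by
  -- characteristic facts
  have h2 : (2 : k) ≠ 0 := by
    rcases hp with h | h
    · subst h
      haveI : CharZero k := CharP.charP_to_charZero k
      exact two_ne_zero
    · intro heq
      have hd : p ∣ 2 := (CharP.cast_eq_zero_iff k p 2).mp (by exact_mod_cast heq)
      have := Nat.le_of_dvd (by norm_num) hd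
      omega
  have h8 : (-8 : k) ≠ 0 := by
    have : (8 : k) = 2 ^ 3 := by norm_num
    simp only [neg_ne_zero, this]
    exact pow_ne_zero _ h2
  -- the explicit homogenization
  set F₀ := stmt7F0 α1 α2 α3 α4 β1 β2 β3 β4 with hF₀def
  have hhom0 : F₀.IsHomogeneous 6 := stmt7F0_hom _ _ _ _ _ _ _ _
  have hde : aeval ![(X 0 : MvPolynomial (Fin 2) k), X 1, 1] F₀ = f := by
    rw [hf, hφ1, hφ2, hF₀def]
    exact stmt7F0_dehom _ _ _ _ _ _ _ _
  -- F agrees with F₀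
  have key : ∀ v : Fin 3 → k, eval v (X 2 * (F - F₀)) = 0 := by
    intro v
    rcases eq_or_ne (v 2) 0 with h0 | h0
    · simp [h0]
    · have hv : v = fun i => v 2 * (![v 0 / v 2, v 1 / v 2, 1] i) := by
        have hall : ∀ j : Fin 3, j = 0 ∨ j = 1 ∨ j = 2 := by decide
        funext i
        rcases hall i with rfl | rfl | rfl <;>
          simp only [Matrix.cons_val_zero, Matrix.cons_val_one, Matrix.head_cons,
            Matrix.cons_val_two, Matrix.tail_cons, Fin.isValue, mul_one]
        · rw [mul_comm]
          exact (div_mul_cancel₀ _ h0).symm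
        · rw [mul_comm]
          exact (div_mul_cancel₀ _ h0).symm
      have e1 : eval v F = v 2 ^ 6 * eval ![v 0 / v 2, v 1 / v 2, 1] F := by
        conv_lhs => rw [hv]
        exact stmt7_aux_eval_smul hFhom _ _
      have e2 : eval v F₀ = v 2 ^ 6 * eval ![v 0 / v 2, v 1 / v 2, 1] F₀ := by
        conv_lhs => rw [hv]
        exact stmt7_aux_eval_smul hhom0 _ _
      have e3 : eval (![v 0 / v 2, v 1 / v 2, 1] : Fin 3 → k) F
          = eval ![v 0 / v 2, v 1 / v 2, 1] F₀ := by
        rw [← stmt7_aux_eval_dehom F, ← stmt7_aux_eval_dehom F₀, hFf, hde]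
      rw [map_mul, map_sub, e1, e2, e3]
      ring
  have hzero : (X 2 : MvPolynomial (Fin 3) k) * (F - F₀) = 0 :=
    MvPolynomial.funext fun x => by rw [key x, map_zero]
  have hFF : F = F₀ := by
    rcases mul_eq_zero.mp hzero with h | h
    · exact absurd h (X_ne_zero 2)
    · exact sub_eq_zero.mp h
  constructor
  · rw [hFF, hF₀def, stmt7F0_eval1]
    exact h2
  · rw [hFF, hF₀def, stmt7F0_eval2]
    exact h8
end

section
/- There is no point (x, y) ∈ k² with y ≠ 0 at which f and both partial derivatives f_x and f_y vanish simultaneously; i.e., the affine curve f = 0 has no singular point with y ≠ 0. -/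
open MvPolynomial

lemma quartic_aux {k : Type*} [Field k] {x a1 a2 a3 a4 : k}
    (h12 : a1≠a2) (h13 : a1≠a3) (h14 : a1≠a4) (h23 : a2≠a3) (h24 : a2≠a4) (h34 : a3≠a4)
    (h0 : (x-a1)*(x-a2)*(x-a3)*(x-a4) = 0)
    (h1 : (x-a2)*(x-a3)*(x-a4)+(x-a1)*(x-a3)*(x-a4)+(x-a1)*(x-a2)*(x-a4)+(x-a1)*(x-a2)*(x-a3) = 0) :
    False := by
  rcases mul_eq_zero.mp h0 with h | h
  rcases mul_eq_zero.mp h with h | h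
  rcases mul_eq_zero.mp h with h | h
  · have hx := sub_eq_zero.mp h
    subst hx
    exact mul_ne_zero (mul_ne_zero (sub_ne_zero.mpr h12) (sub_ne_zero.mpr h13)) (sub_ne_zero.mpr h14) (by linear_combination h1)
  · have hx := sub_eq_zero.mp h
    subst hx
    exact mul_ne_zero (mul_ne_zero (sub_ne_zero.mpr h12.symm) (sub_ne_zero.mpr h23)) (sub_ne_zero.mpr h24) (by linear_combination h1)
  · have hx := sub_eq_zero.mp h
    subst hx
    exact mul_ne_zero (mul_ne_zero (sub_ne_zero.mpr h13.symm) (sub_ne_zero.mpr h23.symm)) (sub_ne_zero.mpr h34) (by linear_combination h1)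
  · have hx := sub_eq_zero.mp h
    subst hx
    exact mul_ne_zero (mul_ne_zero (sub_ne_zero.mpr h14.symm) (sub_ne_zero.mpr h24.symm)) (sub_ne_zero.mpr h34.symm) (by linear_combination h1)

/-- The affine curve f = 0 has no singular point (x, y) with y ≠ 0. -/
theorem stmt_8
    {k : Type*} [Field k] [IsAlgClosed k]
    (p : ℕ) [CharP k p] (hp : p = 0 ∨ 5 ≤ p)
    (α1 α2 α3 α4 β1 β2 β3 β4 : k)
    (hdist : ([α1, α2, α3, α4, β1, β2, β3, β4] : List k).Pairwise (· ≠ ·))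
    (φ1 φ2 f : MvPolynomial (Fin 2) k)
    (hφ1 : φ1 = (X 0 - C α1) * (X 0 - C α2) * (X 0 - C α3) * (X 0 - C α4))
    (hφ2 : φ2 = (X 0 - C β1) * (X 0 - C β2) * (X 0 - C β3) * (X 0 - C β4))
    (hf : f = X 1 ^ 4 - C 2 * (φ1 + φ2) * X 1 ^ 2 + (φ1 - φ2) ^ 2) :
    ¬ ∃ x y : k, y ≠ 0
      ∧ eval (![x, y] : Fin 2 → k) f = 0
      ∧ eval (![x, y] : Fin 2 → k) (pderiv 0 f) = 0
      ∧ eval (![x, y] : Fin 2 → k) (pderiv 1 f) = 0 := by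
  -- characteristic facts
  have h4 : (4 : k) ≠ 0 := by
    intro h
    have := (CharP.cast_eq_zero_iff k p 4).mp (by exact_mod_cast h)
    rcases hp with rfl | hp
    · simp at this
    · exact absurd (Nat.le_of_dvd (by norm_num) this) (by omega)
  rintro ⟨x, y, hy, hF, hFx, hFy⟩
  simp [List.pairwise_cons] at hdist
  obtain ⟨⟨h12, h13, h14, -, -, -, -⟩, ⟨h23, h24, -, -, -, -⟩, ⟨h34, -, -, -, -⟩,
    ⟨-, -, -, -⟩, ⟨g12, g13, g14⟩, ⟨g23, g24⟩, g34⟩ := hdist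
  rw [hf, hφ1, hφ2] at hF hFx hFy
  simp [pderiv_mul, pderiv_pow] at hF hFx hFy
  set a : k := (x-α1)*(x-α2)*(x-α3)*(x-α4) with ha_def
  set b : k := (x-β1)*(x-β2)*(x-β3)*(x-β4) with hb_def
  set a' : k := (x-α2)*(x-α3)*(x-α4)+(x-α1)*(x-α3)*(x-α4)+(x-α1)*(x-α2)*(x-α4)+(x-α1)*(x-α2)*(x-α3) with ha'_def
  set b' : k := (x-β2)*(x-β3)*(x-β4)+(x-β1)*(x-β3)*(x-β4)+(x-β1)*(x-β2)*(x-β4)+(x-β1)*(x-β2)*(x-β3) with hb'_def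
  have hF' : y^4 - 2*(a+b)*y^2 + (a-b)^2 = 0 := by
    rw [ha_def, hb_def]; linear_combination hF
  have hFx' : -2*(a'+b')*y^2 + 2*(a-b)*(a'-b') = 0 := by
    rw [ha_def, hb_def, ha'_def, hb'_def]; linear_combination hFx
  have hFy' : y * (4*(y^2 - (a+b))) = 0 := by
    rw [ha_def, hb_def]; linear_combination hFy
  have hy2 : y^2 = a + b := by
    rcases mul_eq_zero.mp hFy' with h | h
    · exact absurd h hy
    · rcases mul_eq_zero.mp h with h | h
      · exact absurd h h4
      · linear_combination h
  have hab : a * b = 0 := by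
    have h4ab : 4 * (a * b) = 0 := by linear_combination (-1 : k)*hF' + (y^2 - a - b)*hy2
    rcases mul_eq_zero.mp h4ab with h | h
    · exact absurd h h4
    · exact h
  rcases mul_eq_zero.mp hab with ha | hb
  · -- φ1(x) = 0
    have hb : b ≠ 0 := by
      intro h
      apply hy
      have : y ^ 2 = 0 := by rw [hy2, ha, h, add_zero]
      exact pow_eq_zero_iff (by norm_num) |>.mp this
    have ha' : a' = 0 := by
      have h4ab : 4 * (a' * b) = 0 := by
        linear_combination (-1 : k)*hFx' + (-2*(a'+b'))*hy2 + (-4*b')*ha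
      rcases mul_eq_zero.mp h4ab with h | h
      · exact absurd h h4
      · exact (mul_eq_zero.mp h).resolve_right hb
    exact quartic_aux h12 h13 h14 h23 h24 h34 ha ha'
  · -- φ2(x) = 0
    have ha : a ≠ 0 := by
      intro h
      apply hy
      have : y ^ 2 = 0 := by rw [hy2, hb, h, add_zero]
      exact pow_eq_zero_iff (by norm_num) |>.mp this
    have hb' : b' = 0 := by
      have h4ab : 4 * (b' * a) = 0 := by
        linear_combination (-1 : k)*hFx' + (-2*(a'+b'))*hy2 + (-4*a')*hb
      rcases mul_eq_zero.mp h4ab with h | h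
      · exact absurd h h4
      · exact (mul_eq_zero.mp h).resolve_right ha
    exact quartic_aux g12 g13 g14 g23 g24 g34 hb hb'
end

section
/- If (ξ, 0) ∈ k² is a singular point of the affine curve f = 0 (that is, f(ξ,0) = f_x(ξ,0) = f_y(ξ,0) = 0), then the second-order partial derivative f_yy does not vanish at (ξ, 0); in particular, every such singular point has multiplicity exactly 2. -/
open MvPolynomial

set_option maxHeartbeats 1000000 in
/-- Every singular point (ξ, 0) of the affine curve f = 0 has multiplicity
exactly 2: the second-order partial derivative f_yy does not vanish there. -/
theorem stmt_9
    {k : Type*} [Field k] [IsAlgClosed k]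
    (p : ℕ) [CharP k p] (hp : p = 0 ∨ 5 ≤ p)
    (α1 α2 α3 α4 β1 β2 β3 β4 : k)
    (hdist : ([α1, α2, α3, α4, β1, β2, β3, β4] : List k).Pairwise (· ≠ ·))
    (φ1 φ2 f : MvPolynomial (Fin 2) k)
    (hφ1 : φ1 = (X 0 - C α1) * (X 0 - C α2) * (X 0 - C α3) * (X 0 - C α4))
    (hφ2 : φ2 = (X 0 - C β1) * (X 0 - C β2) * (X 0 - C β3) * (X 0 - C β4))
    (hf : f = X 1 ^ 4 - C 2 * (φ1 + φ2) * X 1 ^ 2 + (φ1 - φ2) ^ 2) :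
    ∀ ξ : k,
      eval (![ξ, 0] : Fin 2 → k) f = 0 →
      eval (![ξ, 0] : Fin 2 → k) (pderiv 0 f) = 0 →
      eval (![ξ, 0] : Fin 2 → k) (pderiv 1 f) = 0 →
      eval (![ξ, 0] : Fin 2 → k) (pderiv 1 (pderiv 1 f)) ≠ 0 := by
  intro ξ h0 _ _
  set m : Fin 2 → k := ![ξ, 0] with hm
  have hm1 : m 1 = 0 := rfl
  have hz1 : pderiv 1 φ1 = 0 := by subst hφ1; simp [pderiv_mul, pderiv_X]
  have hz2 : pderiv 1 φ2 = 0 := by subst hφ2; simp [pderiv_mul, pderiv_X]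
  have hAB : eval m φ1 = eval m φ2 := by
    rw [hf] at h0
    simp [hm1] at h0
    exact sub_eq_zero.mp h0
  have hgoal : eval m (pderiv 1 (pderiv 1 f)) = -8 * eval m φ1 := by
    rw [hf]
    simp [pderiv_mul, pderiv_X, hz1, hz2, hm1, hAB]
    ring
  rw [hgoal]
  have h8 : (8 : k) ≠ 0 := by
    have h2 : (2 : k) ≠ 0 := by
      have hne : p ≠ 2 := by rcases hp with rfl | hp5 <;> omega
      exact_mod_cast CharP.cast_ne_zero_of_ne_of_prime k Nat.prime_two hne
    have h82 : (8 : k) = 2 ^ 3 := by norm_num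
    rw [h82]; exact pow_ne_zero _ h2
  have hA : eval m φ1 ≠ 0 := by
    intro hA0
    have hB0 : eval m φ2 = 0 := hAB ▸ hA0
    rw [hφ1] at hA0; rw [hφ2] at hB0
    have hξ : ξ = α1 ∨ ξ = α2 ∨ ξ = α3 ∨ ξ = α4 := by
      simp only [map_mul, map_sub, eval_X, eval_C, mul_eq_zero, sub_eq_zero] at hA0
      have : m 0 = ξ := rfl
      rw [this] at hA0
      tauto
    have hξ' : ξ = β1 ∨ ξ = β2 ∨ ξ = β3 ∨ ξ = β4 := by
      simp only [map_mul, map_sub, eval_X, eval_C, mul_eq_zero, sub_eq_zero] at hB0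
      have : m 0 = ξ := rfl
      rw [this] at hB0
      tauto
    have hcross : ∀ a ∈ [α1,α2,α3,α4], ∀ b ∈ [β1,β2,β3,β4], a ≠ b := by
      have h' : (([α1,α2,α3,α4] ++ [β1,β2,β3,β4] : List k)).Pairwise (· ≠ ·) := hdist
      exact (List.pairwise_append.mp h').2.2
    rcases hξ with rfl|rfl|rfl|rfl <;> rcases hξ' with h|h|h|h <;>
      exact hcross _ (by simp) _ (by simp) h
  intro h
  rcases mul_eq_zero.mp h with h' | h'
  · exact h8 (neg_eq_zero.mp h')
  · exact hA h'
end

section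
/- The set of singular points of the affine curve f = 0, namely the set of (x, y) ∈ k² with f(x,y) = f_x(x,y) = f_y(x,y) = 0, is exactly the set {(ξ, 0) : ξ ∈ k, h1(ξ) = 0} of points on the x-axis whose first coordinate is a root of h1. -/
open MvPolynomial

private lemma aux_sing {k : Type*} [Field k] (h4 : (4:k) ≠ 0) (y a b da db : k)
    (ha : a = 0) (hy : y ^ 2 = a + b) (hb : b ≠ 0) (hda : da ≠ 0)
    (hE : -2*(da+db)*y^2 + 2*(a-b)*(da-db) = 0) : False := by
  subst ha
  rw [zero_add] at hy
  rw [hy] at hE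
  have h : (4:k) * (b * da) = 0 := by linear_combination -hE
  rcases mul_eq_zero.mp h with h | h
  · exact h4 h
  · rcases mul_eq_zero.mp h with h | h
    · exact hb h
    · exact hda h

/-- The singular points of the affine curve f = 0 are exactly the points
(ξ, 0) where ξ is a root of h1. -/
theorem stmt_10
    {k : Type*} [Field k] [IsAlgClosed k]
    (p : ℕ) [CharP k p] (hp : p = 0 ∨ 5 ≤ p)
    (α1 α2 α3 α4 β1 β2 β3 β4 : k)
    (hdist : ([α1, α2, α3, α4, β1, β2, β3, β4] : List k).Pairwise (· ≠ ·))
    (σ1 σ2 σ3 σ4 τ1 τ2 τ3 τ4 : k)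
    (hσ1 : σ1 = α1 + α2 + α3 + α4)
    (hσ2 : σ2 = α1 * α2 + α1 * α3 + α1 * α4 + α2 * α3 + α2 * α4 + α3 * α4)
    (hσ3 : σ3 = α1 * α2 * α3 + α1 * α2 * α4 + α1 * α3 * α4 + α2 * α3 * α4)
    (hσ4 : σ4 = α1 * α2 * α3 * α4)
    (hτ1 : τ1 = β1 + β2 + β3 + β4)
    (hτ2 : τ2 = β1 * β2 + β1 * β3 + β1 * β4 + β2 * β3 + β2 * β4 + β3 * β4)
    (hτ3 : τ3 = β1 * β2 * β3 + β1 * β2 * β4 + β1 * β3 * β4 + β2 * β3 * β4)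
    (hτ4 : τ4 = β1 * β2 * β3 * β4)
    (φ1 φ2 f : MvPolynomial (Fin 2) k)
    (hφ1 : φ1 = (X 0 - C α1) * (X 0 - C α2) * (X 0 - C α3) * (X 0 - C α4))
    (hφ2 : φ2 = (X 0 - C β1) * (X 0 - C β2) * (X 0 - C β3) * (X 0 - C β4))
    (hf : f = X 1 ^ 4 - C 2 * (φ1 + φ2) * X 1 ^ 2 + (φ1 - φ2) ^ 2)
    (h1 : k → k)
    (hh1 : ∀ x : k, h1 x = (σ1 - τ1) * x ^ 3 - (σ2 - τ2) * x ^ 2 + (σ3 - τ3) * x - (σ4 - τ4)) :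
    {P : k × k | eval (![P.1, P.2] : Fin 2 → k) f = 0
      ∧ eval (![P.1, P.2] : Fin 2 → k) (pderiv 0 f) = 0
      ∧ eval (![P.1, P.2] : Fin 2 → k) (pderiv 1 f) = 0}
    = {P : k × k | ∃ ξ : k, h1 ξ = 0 ∧ P = (ξ, 0)} := by
  -- characteristic facts
  have h4 : (4:k) ≠ 0 := by
    intro h
    have h4' : ((4:ℕ):k) = 0 := by push_cast; exact h
    have hd := (CharP.cast_eq_zero_iff k p 4).mp h4'
    rcases hp with hp | hp
    · simp [hp] at hd
    · exact absurd (Nat.le_of_dvd (by norm_num) hd) (by omega)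
  -- distinctness
  simp only [List.pairwise_cons, List.mem_cons, List.not_mem_nil, or_false,
    forall_eq_or_imp, forall_eq, List.Pairwise.nil] at hdist
  obtain ⟨⟨hα12, hα13, hα14, hα1β1, hα1β2, hα1β3, hα1β4⟩,
    ⟨hα23, hα24, hα2β1, hα2β2, hα2β3, hα2β4⟩,
    ⟨hα34, hα3β1, hα3β2, hα3β3, hα3β4⟩,
    ⟨hα4β1, hα4β2, hα4β3, hα4β4⟩,
    ⟨hβ12, hβ13, hβ14⟩, ⟨hβ23, hβ24⟩, hβ34, -⟩ := hdist
  -- evaluation formulas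
  have eA : ∀ x y : k, eval (![x, y] : Fin 2 → k) f
      = y^4 - 2*((x-α1)*(x-α2)*(x-α3)*(x-α4) + (x-β1)*(x-β2)*(x-β3)*(x-β4))*y^2
        + ((x-α1)*(x-α2)*(x-α3)*(x-α4) - (x-β1)*(x-β2)*(x-β3)*(x-β4))^2 := by
    intro x y
    subst hf hφ1 hφ2
    simp
  have eX : ∀ x y : k, eval (![x, y] : Fin 2 → k) (pderiv 0 f)
      = -2*(((x-α2)*(x-α3)*(x-α4) + (x-α1)*(x-α3)*(x-α4) + (x-α1)*(x-α2)*(x-α4) + (x-α1)*(x-α2)*(x-α3))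
          + ((x-β2)*(x-β3)*(x-β4) + (x-β1)*(x-β3)*(x-β4) + (x-β1)*(x-β2)*(x-β4) + (x-β1)*(x-β2)*(x-β3)))*y^2
        + 2*((x-α1)*(x-α2)*(x-α3)*(x-α4) - (x-β1)*(x-β2)*(x-β3)*(x-β4))
          * (((x-α2)*(x-α3)*(x-α4) + (x-α1)*(x-α3)*(x-α4) + (x-α1)*(x-α2)*(x-α4) + (x-α1)*(x-α2)*(x-α3))
            - ((x-β2)*(x-β3)*(x-β4) + (x-β1)*(x-β3)*(x-β4) + (x-β1)*(x-β2)*(x-β4) + (x-β1)*(x-β2)*(x-β3))) := by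
    intro x y
    subst hf hφ1 hφ2
    simp [pderiv_mul, map_sub, map_add, pderiv_pow, pderiv_X, pderiv_C]
    ring
  have eY : ∀ x y : k, eval (![x, y] : Fin 2 → k) (pderiv 1 f)
      = 4*y^3 - 4*((x-α1)*(x-α2)*(x-α3)*(x-α4) + (x-β1)*(x-β2)*(x-β3)*(x-β4))*y := by
    intro x y
    subst hf hφ1 hφ2
    simp [pderiv_mul, map_sub, map_add, pderiv_pow, pderiv_X, pderiv_C]
    ring
  ext ⟨x, y⟩
  simp only [Set.mem_setOf_eq, Prod.mk.injEq]
  rw [eA x y, eX x y, eY x y]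
  set a : k := (x-α1)*(x-α2)*(x-α3)*(x-α4) with ha
  set b : k := (x-β1)*(x-β2)*(x-β3)*(x-β4) with hb
  set da : k := (x-α2)*(x-α3)*(x-α4) + (x-α1)*(x-α3)*(x-α4)
      + (x-α1)*(x-α2)*(x-α4) + (x-α1)*(x-α2)*(x-α3) with hda
  set db : k := (x-β2)*(x-β3)*(x-β4) + (x-β1)*(x-β3)*(x-β4)
      + (x-β1)*(x-β2)*(x-β4) + (x-β1)*(x-β2)*(x-β3) with hdb
  constructor
  · rintro ⟨hF, hFx, hFy⟩
    by_cases hy : y = 0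
    · subst hy
      refine ⟨x, ?_, rfl, rfl⟩
      have hab : a - b = 0 := by
        have h' : (a - b)^2 = 0 := by linear_combination hF
        exact pow_eq_zero_iff (by norm_num) |>.mp h'
      rw [ha, hb] at hab
      rw [hh1, hσ1, hσ2, hσ3, hσ4, hτ1, hτ2, hτ3, hτ4]
      linear_combination -hab
    · exfalso
      have hy2 : y^2 = a + b := by
        have h' : 4 * y * (y^2 - (a + b)) = 0 := by linear_combination hFy
        rcases mul_eq_zero.mp h' with h' | h'
        · rcases mul_eq_zero.mp h' with h' | h'
          · exact absurd h' h4
          · exact absurd h' hy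
        · exact sub_eq_zero.mp h'
      have hab : a * b = 0 := by
        have h' : (4:k) * (a * b) = 0 := by
          linear_combination -hF + (y^2 - (a + b)) * hy2
        rcases mul_eq_zero.mp h' with h' | h'
        · exact absurd h' h4
        · exact h'
      rcases mul_eq_zero.mp hab with hA0 | hB0
      · -- a = 0, so x = some αi
        have h0 := hA0
        rw [ha] at h0
        have hroots : x = α1 ∨ x = α2 ∨ x = α3 ∨ x = α4 := by
          simpa [mul_eq_zero, or_assoc, sub_eq_zero] using h0
        rcases hroots with h' | h' | h' | h'
        · refine aux_sing h4 y a b da db hA0 hy2 ?_ ?_ hFx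
          · rw [hb, h']
            exact mul_ne_zero (mul_ne_zero (mul_ne_zero (sub_ne_zero.mpr hα1β1)
              (sub_ne_zero.mpr hα1β2)) (sub_ne_zero.mpr hα1β3)) (sub_ne_zero.mpr hα1β4)
          · have hval : da = (α1-α2)*(α1-α3)*(α1-α4) := by rw [hda, h']; ring
            rw [hval]
            exact mul_ne_zero (mul_ne_zero (sub_ne_zero.mpr hα12) (sub_ne_zero.mpr hα13))
              (sub_ne_zero.mpr hα14)
        · refine aux_sing h4 y a b da db hA0 hy2 ?_ ?_ hFx
          · rw [hb, h']
            exact mul_ne_zero (mul_ne_zero (mul_ne_zero (sub_ne_zero.mpr hα2β1)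
              (sub_ne_zero.mpr hα2β2)) (sub_ne_zero.mpr hα2β3)) (sub_ne_zero.mpr hα2β4)
          · have hval : da = (α2-α1)*(α2-α3)*(α2-α4) := by rw [hda, h']; ring
            rw [hval]
            exact mul_ne_zero (mul_ne_zero (sub_ne_zero.mpr hα12.symm) (sub_ne_zero.mpr hα23))
              (sub_ne_zero.mpr hα24)
        · refine aux_sing h4 y a b da db hA0 hy2 ?_ ?_ hFx
          · rw [hb, h']
            exact mul_ne_zero (mul_ne_zero (mul_ne_zero (sub_ne_zero.mpr hα3β1)
              (sub_ne_zero.mpr hα3β2)) (sub_ne_zero.mpr hα3β3)) (sub_ne_zero.mpr hα3β4)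
          · have hval : da = (α3-α1)*(α3-α2)*(α3-α4) := by rw [hda, h']; ring
            rw [hval]
            exact mul_ne_zero (mul_ne_zero (sub_ne_zero.mpr hα13.symm) (sub_ne_zero.mpr hα23.symm))
              (sub_ne_zero.mpr hα34)
        · refine aux_sing h4 y a b da db hA0 hy2 ?_ ?_ hFx
          · rw [hb, h']
            exact mul_ne_zero (mul_ne_zero (mul_ne_zero (sub_ne_zero.mpr hα4β1)
              (sub_ne_zero.mpr hα4β2)) (sub_ne_zero.mpr hα4β3)) (sub_ne_zero.mpr hα4β4)
          · have hval : da = (α4-α1)*(α4-α2)*(α4-α3) := by rw [hda, h']; ring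
            rw [hval]
            exact mul_ne_zero (mul_ne_zero (sub_ne_zero.mpr hα14.symm) (sub_ne_zero.mpr hα24.symm))
              (sub_ne_zero.mpr hα34.symm)
      · -- b = 0, so x = some βi
        have h0 := hB0
        rw [hb] at h0
        have hroots : x = β1 ∨ x = β2 ∨ x = β3 ∨ x = β4 := by
          simpa [mul_eq_zero, or_assoc, sub_eq_zero] using h0
        have hy2' : y^2 = b + a := by rw [hy2]; ring
        have hFx' : -2*(db + da)*y^2 + 2*(b - a)*(db - da) = 0 := by
          linear_combination hFx
        rcases hroots with h' | h' | h' | h'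
        · refine aux_sing h4 y b a db da hB0 hy2' ?_ ?_ hFx'
          · rw [ha, h']
            exact mul_ne_zero (mul_ne_zero (mul_ne_zero (sub_ne_zero.mpr hα1β1.symm)
              (sub_ne_zero.mpr hα2β1.symm)) (sub_ne_zero.mpr hα3β1.symm)) (sub_ne_zero.mpr hα4β1.symm)
          · have hval : db = (β1-β2)*(β1-β3)*(β1-β4) := by rw [hdb, h']; ring
            rw [hval]
            exact mul_ne_zero (mul_ne_zero (sub_ne_zero.mpr hβ12) (sub_ne_zero.mpr hβ13))
              (sub_ne_zero.mpr hβ14)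
        · refine aux_sing h4 y b a db da hB0 hy2' ?_ ?_ hFx'
          · rw [ha, h']
            exact mul_ne_zero (mul_ne_zero (mul_ne_zero (sub_ne_zero.mpr hα1β2.symm)
              (sub_ne_zero.mpr hα2β2.symm)) (sub_ne_zero.mpr hα3β2.symm)) (sub_ne_zero.mpr hα4β2.symm)
          · have hval : db = (β2-β1)*(β2-β3)*(β2-β4) := by rw [hdb, h']; ring
            rw [hval]
            exact mul_ne_zero (mul_ne_zero (sub_ne_zero.mpr hβ12.symm) (sub_ne_zero.mpr hβ23))
              (sub_ne_zero.mpr hβ24)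
        · refine aux_sing h4 y b a db da hB0 hy2' ?_ ?_ hFx'
          · rw [ha, h']
            exact mul_ne_zero (mul_ne_zero (mul_ne_zero (sub_ne_zero.mpr hα1β3.symm)
              (sub_ne_zero.mpr hα2β3.symm)) (sub_ne_zero.mpr hα3β3.symm)) (sub_ne_zero.mpr hα4β3.symm)
          · have hval : db = (β3-β1)*(β3-β2)*(β3-β4) := by rw [hdb, h']; ring
            rw [hval]
            exact mul_ne_zero (mul_ne_zero (sub_ne_zero.mpr hβ13.symm) (sub_ne_zero.mpr hβ23.symm))
              (sub_ne_zero.mpr hβ34)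
        · refine aux_sing h4 y b a db da hB0 hy2' ?_ ?_ hFx'
          · rw [ha, h']
            exact mul_ne_zero (mul_ne_zero (mul_ne_zero (sub_ne_zero.mpr hα1β4.symm)
              (sub_ne_zero.mpr hα2β4.symm)) (sub_ne_zero.mpr hα3β4.symm)) (sub_ne_zero.mpr hα4β4.symm)
          · have hval : db = (β4-β1)*(β4-β2)*(β4-β3) := by rw [hdb, h']; ring
            rw [hval]
            exact mul_ne_zero (mul_ne_zero (sub_ne_zero.mpr hβ14.symm) (sub_ne_zero.mpr hβ24.symm))
              (sub_ne_zero.mpr hβ34.symm)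
  · rintro ⟨ξ, hξ, rfl, rfl⟩
    have hab : a - b = 0 := by
      rw [hh1, hσ1, hσ2, hσ3, hσ4, hτ1, hτ2, hτ3, hτ4] at hξ
      rw [ha, hb]
      linear_combination -hξ
    refine ⟨?_, ?_, ?_⟩
    · rw [hab]; ring
    · rw [hab]; ring
    · ring
end

section
/- Assume σ1 = τ1, σ2 ≠ τ2, and Res_x(h1, h1′) = 0. Then the projective curve F = 0 has a unique singular point of the form (x:0:1), namely (ξ:0:1) with ξ = (σ3−τ3)/(2(σ2−τ2)), and Sing = {(0:1:0), (1:0:0), (ξ:0:1)} has exactly 3 elements. -/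
open MvPolynomial

section Aux
variable {k : Type*} [Field k]

lemma eval_aeval' {n m : ℕ} (g : Fin n → MvPolynomial (Fin m) k) (v : Fin m → k)
    (p : MvPolynomial (Fin n) k) :
    eval v (aeval g p) = eval (fun i => eval v (g i)) p := by
  have h := comp_aeval_apply (R := k) (φ := MvPolynomial.aeval (R := k) (S₁ := k) v) (f := g) p
  exact h

lemma peval_aeval' {n : ℕ} (g : Fin n → Polynomial k) (z : k)
    (p : MvPolynomial (Fin n) k) :
    Polynomial.eval z (aeval g p) = eval (fun i => Polynomial.eval z (g i)) p := by
  have h := comp_aeval_apply (R := k) (φ := Polynomial.aeval (R := k) (A := k) z) (f := g) p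
  exact h

lemma eval_smul_homog {m n : ℕ} {F : MvPolynomial (Fin m) k} (hF : F.IsHomogeneous n)
    (c : k) (v : Fin m → k) : eval (c • v) F = c ^ n * eval v F := by
  rw [eval_eq, eval_eq, Finset.mul_sum]
  apply Finset.sum_congr rfl
  intro d hd
  have hdeg : d.degree = n := by
    rw [Finsupp.degree_eq_weight_one]
    exact hF (mem_support_iff.mp hd)
  have h2 : ∏ i ∈ d.support, (c • v) i ^ d i
      = c ^ n * ∏ i ∈ d.support, v i ^ d i := by
    simp only [Pi.smul_apply, smul_eq_mul, mul_pow, Finset.prod_mul_distrib]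
    rw [Finset.prod_pow_eq_pow_sum, ← hdeg]
    rfl
  rw [h2]; ring

lemma F_eq_G [Infinite k] {F G : MvPolynomial (Fin 3) k}
    (hF : F.IsHomogeneous 6) (hG : G.IsHomogeneous 6)
    (h : aeval ![(X 0 : MvPolynomial (Fin 2) k), X 1, 1] F
       = aeval ![(X 0 : MvPolynomial (Fin 2) k), X 1, 1] G) : F = G := by
  have hD : (F - G).IsHomogeneous 6 := hF.sub hG
  have hDa : aeval ![(X 0 : MvPolynomial (Fin 2) k), X 1, 1] (F - G) = 0 := by
    rw [map_sub, h, sub_self]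
  rw [← sub_eq_zero]
  apply hD.eq_zero_of_forall_eval_eq_zero
  intro r
  set D := F - G with hDdef
  -- the one-variable polynomial t ↦ eval ![r 0, r 1, t] D
  set q : Polynomial k := aeval ![Polynomial.C (r 0), Polynomial.C (r 1), Polynomial.X] D with hq
  have hqeval : ∀ t : k, q.eval t = eval ![r 0, r 1, t] D := by
    intro t
    rw [hq, peval_aeval']
    have hvec : (fun i => Polynomial.eval t
        (![Polynomial.C (r 0), Polynomial.C (r 1), Polynomial.X] i)) = ![r 0, r 1, t] := by
      funext i; fin_cases i <;> simp
    rw [hvec]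
  have hzero : ∀ t : k, t ≠ 0 → q.eval t = 0 := by
    intro t ht
    rw [hqeval]
    have hsmul : (![r 0, r 1, t] : Fin 3 → k) = t • ![r 0 / t, r 1 / t, 1] := by
      funext i
      fin_cases i <;> simp [mul_div_cancel₀ _ ht]
    rw [hsmul, eval_smul_homog hD]
    have : eval ![r 0 / t, r 1 / t, (1 : k)] D = 0 := by
      have h2 := eval_aeval' ![(X 0 : MvPolynomial (Fin 2) k), X 1, 1] ![r 0 / t, r 1 / t] D
      have hvec : (fun i => eval ![r 0 / t, r 1 / t]
          (![(X 0 : MvPolynomial (Fin 2) k), X 1, 1] i)) = ![r 0 / t, r 1 / t, 1] := by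
        funext i; fin_cases i <;> simp
      rw [hvec, hDa] at h2
      simp only [map_zero] at h2
      exact h2.symm
    rw [this, mul_zero]
  have hq0 : q = 0 := by
    apply Polynomial.eq_zero_of_infinite_isRoot
    apply Set.Infinite.mono (s := {t : k | t ≠ 0})
    · intro t ht
      exact hzero t ht
    · exact (Set.finite_singleton (0 : k)).infinite_compl
  have : eval ![r 0, r 1, r 2] D = 0 := by
    rw [← hqeval, hq0, Polynomial.eval_zero]
  have hr : r = ![r 0, r 1, r 2] := by
    funext i; fin_cases i <;> simp
  rw [hr]; exact this


def P4 (r1 r2 r3 r4 x z : k) : k :=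
  (x - r1*z) * (x - r2*z) * (x - r3*z) * (x - r4*z)
def P4x (r1 r2 r3 r4 x z : k) : k :=
  (x - r2*z)*(x - r3*z)*(x - r4*z) + (x - r1*z)*(x - r3*z)*(x - r4*z)
  + (x - r1*z)*(x - r2*z)*(x - r4*z) + (x - r1*z)*(x - r2*z)*(x - r3*z)
def P4z (r1 r2 r3 r4 x z : k) : k :=
  -(r1*((x - r2*z)*(x - r3*z)*(x - r4*z)) + r2*((x - r1*z)*(x - r3*z)*(x - r4*z))
  + r3*((x - r1*z)*(x - r2*z)*(x - r4*z)) + r4*((x - r1*z)*(x - r2*z)*(x - r3*z)))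
def Hp (s1 s2 s3 s4 x z : k) : k := s1*x^3 - s2*x^2*z + s3*x*z^2 - s4*z^3
def Hpx (s1 s2 s3 s4 x z : k) : k := 3*s1*x^2 - 2*s2*x*z + s3*z^2
def Hpz (s1 s2 s3 s4 x z : k) : k := -s2*x^2 + 2*s3*x*z - 3*s4*z^2

lemma core (α1 α2 α3 α4 β1 β2 β3 β4 : k)
    (h2 : (2:k) ≠ 0)
    (ha12 : α1 ≠ α2) (ha13 : α1 ≠ α3) (ha14 : α1 ≠ α4)
    (ha23 : α2 ≠ α3) (ha24 : α2 ≠ α4) (ha34 : α3 ≠ α4)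
    (hb12 : β1 ≠ β2) (hb13 : β1 ≠ β3) (hb14 : β1 ≠ β4)
    (hb23 : β2 ≠ β3) (hb24 : β2 ≠ β4) (hb34 : β3 ≠ β4)
    (σ1 σ2 σ3 σ4 τ1 τ2 τ3 τ4 : k)
    (hσ1 : σ1 = α1 + α2 + α3 + α4)
    (hσ2 : σ2 = α1 * α2 + α1 * α3 + α1 * α4 + α2 * α3 + α2 * α4 + α3 * α4)
    (hσ3 : σ3 = α1 * α2 * α3 + α1 * α2 * α4 + α1 * α3 * α4 + α2 * α3 * α4)
    (hσ4 : σ4 = α1 * α2 * α3 * α4)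
    (hτ1 : τ1 = β1 + β2 + β3 + β4)
    (hτ2 : τ2 = β1 * β2 + β1 * β3 + β1 * β4 + β2 * β3 + β2 * β4 + β3 * β4)
    (hτ3 : τ3 = β1 * β2 * β3 + β1 * β2 * β4 + β1 * β3 * β4 + β2 * β3 * β4)
    (hτ4 : τ4 = β1 * β2 * β3 * β4)
    (hστ1 : σ1 = τ1) (he2 : σ2 ≠ τ2) (hdisc : (σ3-τ3)^2 = 4*((σ2-τ2)*(σ4-τ4)))
    (x y z : k) :
    (y^4*z^2 - 2*(P4 α1 α2 α3 α4 x z + P4 β1 β2 β3 β4 x z)*y^2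
        + Hp (σ1-τ1) (σ2-τ2) (σ3-τ3) (σ4-τ4) x z ^ 2 = 0
     ∧ -2*(P4x α1 α2 α3 α4 x z + P4x β1 β2 β3 β4 x z)*y^2
        + 2*Hp (σ1-τ1) (σ2-τ2) (σ3-τ3) (σ4-τ4) x z
           * Hpx (σ1-τ1) (σ2-τ2) (σ3-τ3) (σ4-τ4) x z = 0
     ∧ 4*y^3*z^2 - 4*(P4 α1 α2 α3 α4 x z + P4 β1 β2 β3 β4 x z)*y = 0
     ∧ 2*y^4*z - 2*(P4z α1 α2 α3 α4 x z + P4z β1 β2 β3 β4 x z)*y^2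
        + 2*Hp (σ1-τ1) (σ2-τ2) (σ3-τ3) (σ4-τ4) x z
           * Hpz (σ1-τ1) (σ2-τ2) (σ3-τ3) (σ4-τ4) x z = 0)
    ↔ ((y = 0 ∧ z = 0) ∨ (x = 0 ∧ z = 0)
        ∨ (y = 0 ∧ 2*(σ2-τ2)*x = (σ3-τ3)*z)) := by
  have h4 : (4:k) ≠ 0 := by
    intro h; apply h2
    have : (4:k) = 2*2 := by norm_num
    rcases mul_eq_zero.mp (this ▸ h) with h' | h' <;> exact h'
  set e2 := σ2 - τ2 with he2d
  set e3 := σ3 - τ3 with he3d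
  set e4 := σ4 - τ4 with he4d
  have he2' : e2 ≠ 0 := sub_ne_zero.mpr he2
  -- abbreviations
  set Φ1 := P4 α1 α2 α3 α4 x z with hΦ1d
  set Φ2 := P4 β1 β2 β3 β4 x z with hΦ2d
  set Φ1x := P4x α1 α2 α3 α4 x z with hΦ1xd
  set Φ2x := P4x β1 β2 β3 β4 x z with hΦ2xd
  set Hv := Hp (σ1-τ1) e2 e3 e4 x z with hHvd
  set Hx := Hpx (σ1-τ1) e2 e3 e4 x z with hHxd
  set Hz := Hpz (σ1-τ1) e2 e3 e4 x z with hHzd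
  -- key polynomial identities
  have idA : z * Hv = Φ2 - Φ1 := by
    rw [hHvd, hΦ1d, hΦ2d, Hp, P4, P4]
    subst hσ1 hσ2 hσ3 hσ4 hτ1 hτ2 hτ3 hτ4; ring
  have idB : z * Hx = Φ2x - Φ1x := by
    rw [hHxd, hΦ1xd, hΦ2xd, Hpx, P4x, P4x]
    subst hσ1 hσ2 hσ3 hσ4 hτ1 hτ2 hτ3 hτ4; ring
  have idH : Hv = z * (-(e2*x^2) + e3*x*z - e4*z^2) := by
    rw [hHvd, Hp, hστ1]; ring
  constructor
  · rintro ⟨hE0, hE1, hE2, hE3⟩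
    by_cases hy : y = 0
    · subst hy
      have hHv : Hv = 0 := by
        have h' : Hv^2 = 0 := by linear_combination hE0
        exact pow_eq_zero_iff (two_ne_zero) |>.mp h'
      by_cases hz : z = 0
      · exact Or.inl ⟨rfl, hz⟩
      · right; right
        refine ⟨rfl, ?_⟩
        have hzq : z * (-(e2*x^2) + e3*x*z - e4*z^2) = 0 := by rw [← idH]; exact hHv
        have hq : -(e2*x^2) + e3*x*z - e4*z^2 = 0 := by
          rcases mul_eq_zero.mp hzq with h | h
          · exact absurd h hz
          · exact h
        have hsq : (2*e2*x - e3*z)^2 = 0 := by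
          linear_combination (-4*e2) * hq + z^2 * hdisc
        have h0 : 2*e2*x - e3*z = 0 := by
          exact pow_eq_zero_iff (two_ne_zero) |>.mp hsq
        linear_combination h0
    · have h4y : (4:k)*y ≠ 0 := mul_ne_zero h4 hy
      have hΦ : Φ1 + Φ2 = y^2*z^2 := by
        have h' : 4*y*(y^2*z^2 - (Φ1+Φ2)) = 0 := by linear_combination hE2
        have h'' := (mul_eq_zero.mp h').resolve_left h4y
        linear_combination -h''
      by_cases hz : z = 0
      · subst hz
        have h2x : 2*x^4 = 0 := by
          have hexp : Φ1 + Φ2 = 2*x^4 := by rw [hΦ1d, hΦ2d, P4, P4]; ring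
          linear_combination hΦ - hexp
        have hx4 : x^4 = 0 := by
          rcases mul_eq_zero.mp h2x with h | h
          · exact absurd h h2
          · exact h
        exact Or.inr (Or.inl ⟨pow_eq_zero_iff (by norm_num) |>.mp hx4, rfl⟩)
      · exfalso
        have hHsq : Hv^2 = y^4*z^2 := by linear_combination hE0 + 2*y^2*hΦ
        have hprod : Φ1 * Φ2 = 0 := by
          have h4p : 4*(Φ1*Φ2) = 0 := by
            linear_combination (Φ1+Φ2+y^2*z^2)*hΦ + (z*Hv + Φ2 - Φ1)*idA - z^2*hHsq
          rcases mul_eq_zero.mp h4p with h | h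
          · exact absurd h h4
          · exact h
        rcases mul_eq_zero.mp hprod with h1 | h1
        · have hΦ2v : Φ2 = y^2*z^2 := by linear_combination hΦ - h1
          have hΦ2ne : Φ2 ≠ 0 := by
            rw [hΦ2v]
            exact mul_ne_zero (pow_ne_zero 2 hy) (pow_ne_zero 2 hz)
          have hΦ1x : Φ1x = 0 := by
            have hkey : (-4)*(Φ2 * Φ1x) = 0 := by
              linear_combination z^2*hE1 - 2*(Φ1x+Φ2x)*hΦ2v - 2*(z*Hv)*idB
                - 2*(Φ2x-Φ1x)*idA + 2*(Φ2x-Φ1x)*h1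
            have h' : Φ2 * Φ1x = 0 := by
              rcases mul_eq_zero.mp hkey with h | h
              · exact absurd (by linear_combination -h) h4
              · exact h
            exact (mul_eq_zero.mp h').resolve_left hΦ2ne
          have hmul : (x - α1*z)*(x - α2*z)*(x - α3*z)*(x - α4*z) = 0 := by
            rw [hΦ1d, P4] at h1; exact h1
          rw [hΦ1xd, P4x] at hΦ1x
          rcases mul_eq_zero.mp hmul with h' | h'
          rotate_left
          · have hx : x = α4*z := sub_eq_zero.mp h'
            subst hx
            have h0 : z^3*((α4-α1)*((α4-α2)*(α4-α3))) = 0 := by linear_combination hΦ1x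
            rcases mul_eq_zero.mp h0 with h | h
            · exact hz (pow_eq_zero_iff (by norm_num) |>.mp h)
            rcases mul_eq_zero.mp h with h | h
            · exact ha14 (sub_eq_zero.mp h).symm
            rcases mul_eq_zero.mp h with h | h
            · exact ha24 (sub_eq_zero.mp h).symm
            · exact ha34 (sub_eq_zero.mp h).symm
          rcases mul_eq_zero.mp h' with h'' | h''
          rotate_left
          · have hx : x = α3*z := sub_eq_zero.mp h''
            subst hx
            have h0 : z^3*((α3-α1)*((α3-α2)*(α3-α4))) = 0 := by linear_combination hΦ1x
            rcases mul_eq_zero.mp h0 with h | h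
            · exact hz (pow_eq_zero_iff (by norm_num) |>.mp h)
            rcases mul_eq_zero.mp h with h | h
            · exact ha13 (sub_eq_zero.mp h).symm
            rcases mul_eq_zero.mp h with h | h
            · exact ha23 (sub_eq_zero.mp h).symm
            · exact ha34 (sub_eq_zero.mp h)
          rcases mul_eq_zero.mp h'' with h''' | h'''
          · have hx : x = α1*z := sub_eq_zero.mp h'''
            subst hx
            have h0 : z^3*((α1-α2)*((α1-α3)*(α1-α4))) = 0 := by linear_combination hΦ1x
            rcases mul_eq_zero.mp h0 with h | h
            · exact hz (pow_eq_zero_iff (by norm_num) |>.mp h)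
            rcases mul_eq_zero.mp h with h | h
            · exact ha12 (sub_eq_zero.mp h)
            rcases mul_eq_zero.mp h with h | h
            · exact ha13 (sub_eq_zero.mp h)
            · exact ha14 (sub_eq_zero.mp h)
          · have hx : x = α2*z := sub_eq_zero.mp h'''
            subst hx
            have h0 : z^3*((α2-α1)*((α2-α3)*(α2-α4))) = 0 := by linear_combination hΦ1x
            rcases mul_eq_zero.mp h0 with h | h
            · exact hz (pow_eq_zero_iff (by norm_num) |>.mp h)
            rcases mul_eq_zero.mp h with h | h
            · exact ha12 (sub_eq_zero.mp h).symm
            rcases mul_eq_zero.mp h with h | h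
            · exact ha23 (sub_eq_zero.mp h)
            · exact ha24 (sub_eq_zero.mp h)
        · have hΦ1v : Φ1 = y^2*z^2 := by linear_combination hΦ - h1
          have hΦ1ne : Φ1 ≠ 0 := by
            rw [hΦ1v]
            exact mul_ne_zero (pow_ne_zero 2 hy) (pow_ne_zero 2 hz)
          have hΦ2x : Φ2x = 0 := by
            have hkey : (-4)*(Φ1 * Φ2x) = 0 := by
              linear_combination z^2*hE1 - 2*(Φ1x+Φ2x)*hΦ1v - 2*(z*Hv)*idB
                + 2*(Φ1x-Φ2x)*idA - 2*(Φ1x-Φ2x)*h1 + (4*Φ1x - 4*Φ2x)*h1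
            have h' : Φ1 * Φ2x = 0 := by
              rcases mul_eq_zero.mp hkey with h | h
              · exact absurd (by linear_combination -h) h4
              · exact h
            exact (mul_eq_zero.mp h').resolve_left hΦ1ne
          have hmul : (x - β1*z)*(x - β2*z)*(x - β3*z)*(x - β4*z) = 0 := by
            rw [hΦ2d, P4] at h1; exact h1
          rw [hΦ2xd, P4x] at hΦ2x
          rcases mul_eq_zero.mp hmul with h' | h'
          rotate_left
          · have hx : x = β4*z := sub_eq_zero.mp h'
            subst hx
            have h0 : z^3*((β4-β1)*((β4-β2)*(β4-β3))) = 0 := by linear_combination hΦ2x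
            rcases mul_eq_zero.mp h0 with h | h
            · exact hz (pow_eq_zero_iff (by norm_num) |>.mp h)
            rcases mul_eq_zero.mp h with h | h
            · exact hb14 (sub_eq_zero.mp h).symm
            rcases mul_eq_zero.mp h with h | h
            · exact hb24 (sub_eq_zero.mp h).symm
            · exact hb34 (sub_eq_zero.mp h).symm
          rcases mul_eq_zero.mp h' with h'' | h''
          rotate_left
          · have hx : x = β3*z := sub_eq_zero.mp h''
            subst hx
            have h0 : z^3*((β3-β1)*((β3-β2)*(β3-β4))) = 0 := by linear_combination hΦ2x
            rcases mul_eq_zero.mp h0 with h | h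
            · exact hz (pow_eq_zero_iff (by norm_num) |>.mp h)
            rcases mul_eq_zero.mp h with h | h
            · exact hb13 (sub_eq_zero.mp h).symm
            rcases mul_eq_zero.mp h with h | h
            · exact hb23 (sub_eq_zero.mp h).symm
            · exact hb34 (sub_eq_zero.mp h)
          rcases mul_eq_zero.mp h'' with h''' | h'''
          · have hx : x = β1*z := sub_eq_zero.mp h'''
            subst hx
            have h0 : z^3*((β1-β2)*((β1-β3)*(β1-β4))) = 0 := by linear_combination hΦ2x
            rcases mul_eq_zero.mp h0 with h | h
            · exact hz (pow_eq_zero_iff (by norm_num) |>.mp h)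
            rcases mul_eq_zero.mp h with h | h
            · exact hb12 (sub_eq_zero.mp h)
            rcases mul_eq_zero.mp h with h | h
            · exact hb13 (sub_eq_zero.mp h)
            · exact hb14 (sub_eq_zero.mp h)
          · have hx : x = β2*z := sub_eq_zero.mp h'''
            subst hx
            have h0 : z^3*((β2-β1)*((β2-β3)*(β2-β4))) = 0 := by linear_combination hΦ2x
            rcases mul_eq_zero.mp h0 with h | h
            · exact hz (pow_eq_zero_iff (by norm_num) |>.mp h)
            rcases mul_eq_zero.mp h with h | h
            · exact hb12 (sub_eq_zero.mp h).symm
            rcases mul_eq_zero.mp h with h | h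
            · exact hb23 (sub_eq_zero.mp h)
            · exact hb24 (sub_eq_zero.mp h)
  · rintro (⟨hy, hz⟩ | ⟨hx, hz⟩ | ⟨hy, hxz⟩)
    · subst hy; subst hz
      refine ⟨?_, ?_, ?_, ?_⟩ <;>
        simp only [hΦ1d, hΦ2d, hΦ1xd, hΦ2xd, hHvd, hHxd, hHzd, P4, P4x, P4z, Hp, Hpx, Hpz]
      · linear_combination ((σ1-τ1)*x^6 + (τ1 - σ1)*x^6*0)*hστ1
      · linear_combination 6*(σ1-τ1)*x^5*hστ1
      · ring
      · linear_combination (-2)*e2*x^5*hστ1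
    · subst hx; subst hz
      refine ⟨?_, ?_, ?_, ?_⟩ <;>
        simp only [hΦ1d, hΦ2d, hΦ1xd, hΦ2xd, hHvd, hHxd, hHzd, P4, P4x, P4z, Hp, Hpx, Hpz] <;>
        ring
    · subst hy
      have h5 : (-4*e2)*(-(e2*x^2) + e3*x*z - e4*z^2) = 0 := by
        linear_combination (2*e2*x - e3*z)*hxz - z^2*hdisc
      have hq : -(e2*x^2) + e3*x*z - e4*z^2 = 0 := by
        rcases mul_eq_zero.mp h5 with h | h
        · exact absurd h (by simpa using (mul_ne_zero h4 he2' : (4:k)*e2 ≠ 0))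
        · exact h
      have hHv0 : Hv = 0 := by rw [idH, hq, mul_zero]
      refine ⟨?_, ?_, ?_, ?_⟩
      · linear_combination Hv*hHv0
      · linear_combination 2*Hx*hHv0
      · ring
      · linear_combination 2*Hz*hHv0

noncomputable def Gp (a1 a2 a3 a4 b1 b2 b3 b4 s1 s2 s3 s4 : k) : MvPolynomial (Fin 3) k :=
  X 1 ^ 4 * X 2 ^ 2
  - C 2 * ((X 0 - C a1 * X 2) * (X 0 - C a2 * X 2) * (X 0 - C a3 * X 2) * (X 0 - C a4 * X 2)
          + (X 0 - C b1 * X 2) * (X 0 - C b2 * X 2) * (X 0 - C b3 * X 2) * (X 0 - C b4 * X 2))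
      * X 1 ^ 2
  + (C s1 * X 0 ^ 3 - C s2 * X 0 ^ 2 * X 2 + C s3 * X 0 * X 2 ^ 2 - C s4 * X 2 ^ 3) ^ 2

lemma Gp_homog (a1 a2 a3 a4 b1 b2 b3 b4 s1 s2 s3 s4 : k) :
    (Gp a1 a2 a3 a4 b1 b2 b3 b4 s1 s2 s3 s4).IsHomogeneous 6 := by
  have hX : ∀ (i : Fin 3) (r : k), ((X i : MvPolynomial (Fin 3) k) - C r * X 2).IsHomogeneous 1 :=
    fun i r => (isHomogeneous_X _ _).sub (isHomogeneous_C_mul_X r 2)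
  have h4 : ∀ r1 r2 r3 r4 : k, (((X 0 : MvPolynomial (Fin 3) k) - C r1 * X 2) * (X 0 - C r2 * X 2)
      * (X 0 - C r3 * X 2) * (X 0 - C r4 * X 2)).IsHomogeneous 4 := fun r1 r2 r3 r4 =>
    (((hX 0 r1).mul (hX 0 r2)).mul (hX 0 r3)).mul (hX 0 r4)
  have hH : ((C s1 * X 0 ^ 3 - C s2 * X 0 ^ 2 * X 2 + C s3 * X 0 * X 2 ^ 2
      - C s4 * X 2 ^ 3 : MvPolynomial (Fin 3) k)).IsHomogeneous 3 := by
    refine (((?_ : IsHomogeneous _ 3).sub ?_).add ?_).sub ?_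
    · exact isHomogeneous_C_mul_X_pow s1 (0 : Fin 3) 3
    · exact ((isHomogeneous_C_mul_X_pow s2 (0 : Fin 3) 2).mul (isHomogeneous_X k (2 : Fin 3)) : IsHomogeneous _ 3)
    · exact (((isHomogeneous_C (Fin 3) s3).mul (isHomogeneous_X k (0 : Fin 3))).mul
        (isHomogeneous_X_pow (2 : Fin 3) 2) : IsHomogeneous _ 3)
    · exact isHomogeneous_C_mul_X_pow s4 (2 : Fin 3) 3
  refine ((?_ : IsHomogeneous _ 6).sub ?_).add ?_
  · exact ((isHomogeneous_X_pow (R := k) (1 : Fin 3) 4).mul (isHomogeneous_X_pow (2 : Fin 3) 2) : IsHomogeneous _ 6)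
  · exact (((isHomogeneous_C (Fin 3) (2 : k)).mul ((h4 a1 a2 a3 a4).add (h4 b1 b2 b3 b4))).mul
      (isHomogeneous_X_pow (1 : Fin 3) 2) : IsHomogeneous _ 6)
  · exact (hH.pow 2 : IsHomogeneous _ 6)

lemma Gp_eval' (a1 a2 a3 a4 b1 b2 b3 b4 s1 s2 s3 s4 : k) (v : Fin 3 -> k) :
    eval v (Gp a1 a2 a3 a4 b1 b2 b3 b4 s1 s2 s3 s4) =
    (v 1)^4*(v 2)^2 - 2*(P4 a1 a2 a3 a4 (v 0) (v 2) + P4 b1 b2 b3 b4 (v 0) (v 2))*(v 1)^2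
      + Hp s1 s2 s3 s4 (v 0) (v 2) ^ 2 := by
  simp [Gp, P4, Hp]; try ring

lemma Gp_pderiv0' (a1 a2 a3 a4 b1 b2 b3 b4 s1 s2 s3 s4 : k) (v : Fin 3 -> k) :
    eval v (pderiv 0 (Gp a1 a2 a3 a4 b1 b2 b3 b4 s1 s2 s3 s4)) =
    -2*(P4x a1 a2 a3 a4 (v 0) (v 2) + P4x b1 b2 b3 b4 (v 0) (v 2))*(v 1)^2
      + 2*Hp s1 s2 s3 s4 (v 0) (v 2) * Hpx s1 s2 s3 s4 (v 0) (v 2) := by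
  simp [Gp, P4x, Hp, Hpx, pderiv_mul, pderiv_pow]; try ring

lemma Gp_pderiv1' (a1 a2 a3 a4 b1 b2 b3 b4 s1 s2 s3 s4 : k) (v : Fin 3 -> k) :
    eval v (pderiv 1 (Gp a1 a2 a3 a4 b1 b2 b3 b4 s1 s2 s3 s4)) =
    4*(v 1)^3*(v 2)^2 - 4*(P4 a1 a2 a3 a4 (v 0) (v 2) + P4 b1 b2 b3 b4 (v 0) (v 2))*(v 1) := by
  simp [Gp, P4, pderiv_mul, pderiv_pow]; try ring

lemma Gp_pderiv2' (a1 a2 a3 a4 b1 b2 b3 b4 s1 s2 s3 s4 : k) (v : Fin 3 -> k) :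
    eval v (pderiv 2 (Gp a1 a2 a3 a4 b1 b2 b3 b4 s1 s2 s3 s4)) =
    2*(v 1)^4*(v 2) - 2*(P4z a1 a2 a3 a4 (v 0) (v 2) + P4z b1 b2 b3 b4 (v 0) (v 2))*(v 1)^2
      + 2*Hp s1 s2 s3 s4 (v 0) (v 2) * Hpz s1 s2 s3 s4 (v 0) (v 2) := by
  simp [Gp, P4z, Hp, Hpz, pderiv_mul, pderiv_pow]; try ring

end Aux

/-- Case (II-2): if σ1 = τ1, σ2 ≠ τ2 and Res_x(h1, h1') = 0 (h1 now being a
quadratic), then F = 0 has a unique singular point of the form (x:0:1), namely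
(ξ:0:1) with ξ = (σ3-τ3)/(2(σ2-τ2)), and Sing = {(0:1:0), (1:0:0), (ξ:0:1)}
has exactly 3 elements. -/


theorem stmt_16
    {k : Type*} [Field k] [IsAlgClosed k]
    (p : ℕ) [CharP k p] (hp : p = 0 ∨ 5 ≤ p)
    (α1 α2 α3 α4 β1 β2 β3 β4 : k)
    (hdist : ([α1, α2, α3, α4, β1, β2, β3, β4] : List k).Pairwise (· ≠ ·))
    (σ1 σ2 σ3 σ4 τ1 τ2 τ3 τ4 : k)
    (hσ1 : σ1 = α1 + α2 + α3 + α4)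
    (hσ2 : σ2 = α1 * α2 + α1 * α3 + α1 * α4 + α2 * α3 + α2 * α4 + α3 * α4)
    (hσ3 : σ3 = α1 * α2 * α3 + α1 * α2 * α4 + α1 * α3 * α4 + α2 * α3 * α4)
    (hσ4 : σ4 = α1 * α2 * α3 * α4)
    (hτ1 : τ1 = β1 + β2 + β3 + β4)
    (hτ2 : τ2 = β1 * β2 + β1 * β3 + β1 * β4 + β2 * β3 + β2 * β4 + β3 * β4)
    (hτ3 : τ3 = β1 * β2 * β3 + β1 * β2 * β4 + β1 * β3 * β4 + β2 * β3 * β4)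
    (hτ4 : τ4 = β1 * β2 * β3 * β4)
    (φ1 φ2 f : MvPolynomial (Fin 2) k)
    (hφ1 : φ1 = (X 0 - C α1) * (X 0 - C α2) * (X 0 - C α3) * (X 0 - C α4))
    (hφ2 : φ2 = (X 0 - C β1) * (X 0 - C β2) * (X 0 - C β3) * (X 0 - C β4))
    (hf : f = X 1 ^ 4 - C 2 * (φ1 + φ2) * X 1 ^ 2 + (φ1 - φ2) ^ 2)
    (F : MvPolynomial (Fin 3) k)
    (hFhom : F.IsHomogeneous 6)
    (hFf : aeval ![(X 0 : MvPolynomial (Fin 2) k), X 1, 1] F = f)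
    (Sing : Set (Projectivization k (Fin 3 → k)))
    (hSing : ∀ P : Projectivization k (Fin 3 → k),
      P ∈ Sing ↔ (eval P.rep F = 0 ∧
        eval P.rep (pderiv 0 F) = 0 ∧
        eval P.rep (pderiv 1 F) = 0 ∧
        eval P.rep (pderiv 2 F) = 0))
    (h1 : k → k)
    (hh1 : ∀ x : k, h1 x = (σ1 - τ1) * x ^ 3 - (σ2 - τ2) * x ^ 2 + (σ3 - τ3) * x - (σ4 - τ4))
    -- resq = Res_x(h1, h1') where (σ1 = τ1 and) h1 is the quadratic
    -- -(σ2-τ2)x² + (σ3-τ3)x - (σ4-τ4), as a Sylvester determinant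
    (resq : k)
    (hresq : resq = Matrix.det
      !![-(σ2 - τ2), σ3 - τ3, -(σ4 - τ4);
         -2 * (σ2 - τ2), σ3 - τ3, 0;
         0, -2 * (σ2 - τ2), σ3 - τ3])
    (hστ1 : σ1 = τ1) (hστ2 : σ2 ≠ τ2) (hrq : resq = 0) :
    (∀ ξ : k, Projectivization.mk k (![ξ, 0, 1] : Fin 3 → k)
        (by intro hc; simpa using congrFun hc 2) ∈ Sing
      ↔ ξ = (σ3 - τ3) / (2 * (σ2 - τ2)))
    ∧ Sing = {Projectivization.mk k (![0, 1, 0] : Fin 3 → k)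
                (by intro hc; simpa using congrFun hc 1),
              Projectivization.mk k (![1, 0, 0] : Fin 3 → k)
                (by intro hc; simpa using congrFun hc 0),
              Projectivization.mk k
                (![(σ3 - τ3) / (2 * (σ2 - τ2)), 0, 1] : Fin 3 → k)
                (by intro hc; simpa using congrFun hc 2)}
    ∧ Sing.ncard = 3 := by
  
  classical
  simp only [List.pairwise_cons, List.mem_cons, List.not_mem_nil, or_false,
    List.mem_singleton, forall_eq_or_imp, forall_eq, List.Pairwise.nil] at hdist
  obtain ⟨⟨ha12,ha13,ha14,-,-,-,-⟩,⟨ha23,ha24,-,-,-,-⟩,⟨ha34,-,-,-,-⟩,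
    ⟨-,-,-,-⟩,⟨hb12,hb13,hb14⟩,⟨hb23,hb24⟩,hb34,-⟩ := hdist
  have h2k : (2:k) ≠ 0 := by
    rcases hp with rfl | h5
    · have : CharZero k := CharP.charP_to_charZero k
      exact two_ne_zero
    · intro h
      have hdvd : p ∣ 2 := (CharP.cast_eq_zero_iff k p 2).mp (by exact_mod_cast h)
      have := Nat.le_of_dvd (by norm_num) hdvd
      omega
  have he2' : σ2 - τ2 ≠ 0 := sub_ne_zero.mpr hστ2
  have h2e2 : 2*(σ2-τ2) ≠ 0 := mul_ne_zero h2k he2'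
  have hdisc : (σ3-τ3)^2 = 4*((σ2-τ2)*(σ4-τ4)) := by
    rw [hresq] at hrq
    simp [Matrix.det_fin_three] at hrq
    have hm : (σ2-τ2) * ((σ3-τ3)^2 - 4*((σ2-τ2)*(σ4-τ4))) = 0 := by linear_combination hrq
    rcases mul_eq_zero.mp hm with h | h
    · exact absurd h he2'
    · linear_combination h
  have hGf : aeval ![(X 0 : MvPolynomial (Fin 2) k), X 1, 1]
      (Gp α1 α2 α3 α4 β1 β2 β3 β4 (σ1-τ1) (σ2-τ2) (σ3-τ3) (σ4-τ4)) = f := by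
    apply MvPolynomial.funext
    intro w
    rw [eval_aeval']
    have hvec : (fun i => eval w (![(X 0 : MvPolynomial (Fin 2) k), X 1, 1] i))
        = ![w 0, w 1, 1] := by
      funext i; fin_cases i <;> simp
    rw [hvec, Gp_eval', hf, hφ1, hφ2]
    simp only [map_add, map_sub, map_mul, map_pow, map_one, eval_X, eval_C, P4, Hp,
      Matrix.cons_val_zero, Matrix.cons_val_one, Matrix.head_cons, Matrix.cons_val_two,
      Matrix.tail_cons]
    subst hσ1 hσ2 hσ3 hσ4 hτ1 hτ2 hτ3 hτ4
    ring
  have hFG : F = Gp α1 α2 α3 α4 β1 β2 β3 β4 (σ1-τ1) (σ2-τ2) (σ3-τ3) (σ4-τ4) :=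
    F_eq_G hFhom (Gp_homog _ _ _ _ _ _ _ _ _ _ _ _) (hFf.trans hGf.symm)
  simp only [hFG] at hSing
  have hchar : ∀ (v : Fin 3 → k) (hv : v ≠ 0),
      (Projectivization.mk k v hv ∈ Sing ↔
        ((v 1 = 0 ∧ v 2 = 0) ∨ (v 0 = 0 ∧ v 2 = 0)
          ∨ (v 1 = 0 ∧ 2*(σ2-τ2)*(v 0) = (σ3-τ3)*(v 2)))) := by
    intro v hv
    rw [hSing]
    obtain ⟨c, hc⟩ := Projectivization.exists_smul_eq_mk_rep k v hv
    rw [← hc]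
    have hc0 : (c : k) ≠ 0 := c.ne_zero
    have hcv : (c • v) = ((c : k) • v) := rfl
    rw [hcv]
    have hmz : ∀ (n : ℕ) (t : k), ((c:k)^n * t = 0 ↔ t = 0) := by
      intro n t
      constructor
      · intro h
        rcases mul_eq_zero.mp h with h | h
        · exact absurd h (pow_ne_zero n hc0)
        · exact h
      · intro h; rw [h, mul_zero]
    have e0 : eval ((c:k) • v) (Gp α1 α2 α3 α4 β1 β2 β3 β4 (σ1-τ1) (σ2-τ2) (σ3-τ3) (σ4-τ4))
        = (c:k)^6 * eval v (Gp α1 α2 α3 α4 β1 β2 β3 β4 (σ1-τ1) (σ2-τ2) (σ3-τ3) (σ4-τ4)) := by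
      rw [Gp_eval', Gp_eval']
      simp only [Pi.smul_apply, smul_eq_mul, P4, Hp]
      ring
    have e1 : eval ((c:k) • v)
          (pderiv 0 (Gp α1 α2 α3 α4 β1 β2 β3 β4 (σ1-τ1) (σ2-τ2) (σ3-τ3) (σ4-τ4)))
        = (c:k)^5 * eval v
          (pderiv 0 (Gp α1 α2 α3 α4 β1 β2 β3 β4 (σ1-τ1) (σ2-τ2) (σ3-τ3) (σ4-τ4))) := by
      rw [Gp_pderiv0', Gp_pderiv0']
      simp only [Pi.smul_apply, smul_eq_mul, P4x, Hp, Hpx]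
      ring
    have e2 : eval ((c:k) • v)
          (pderiv 1 (Gp α1 α2 α3 α4 β1 β2 β3 β4 (σ1-τ1) (σ2-τ2) (σ3-τ3) (σ4-τ4)))
        = (c:k)^5 * eval v
          (pderiv 1 (Gp α1 α2 α3 α4 β1 β2 β3 β4 (σ1-τ1) (σ2-τ2) (σ3-τ3) (σ4-τ4))) := by
      rw [Gp_pderiv1', Gp_pderiv1']
      simp only [Pi.smul_apply, smul_eq_mul, P4]
      ring
    have e3 : eval ((c:k) • v)
          (pderiv 2 (Gp α1 α2 α3 α4 β1 β2 β3 β4 (σ1-τ1) (σ2-τ2) (σ3-τ3) (σ4-τ4)))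
        = (c:k)^5 * eval v
          (pderiv 2 (Gp α1 α2 α3 α4 β1 β2 β3 β4 (σ1-τ1) (σ2-τ2) (σ3-τ3) (σ4-τ4))) := by
      rw [Gp_pderiv2', Gp_pderiv2']
      simp only [Pi.smul_apply, smul_eq_mul, P4z, Hp, Hpz]
      ring
    rw [e0, e1, e2, e3]
    simp only [hmz]
    rw [Gp_eval', Gp_pderiv0', Gp_pderiv1', Gp_pderiv2']
    exact core α1 α2 α3 α4 β1 β2 β3 β4 h2k ha12 ha13 ha14 ha23 ha24 ha34
      hb12 hb13 hb14 hb23 hb24 hb34 σ1 σ2 σ3 σ4 τ1 τ2 τ3 τ4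
      hσ1 hσ2 hσ3 hσ4 hτ1 hτ2 hτ3 hτ4 hστ1 hστ2 hdisc (v 0) (v 1) (v 2)
  have goal1 : ∀ ξ : k, Projectivization.mk k (![ξ, 0, 1] : Fin 3 → k)
      (by intro hc; simpa using congrFun hc 2) ∈ Sing
      ↔ ξ = (σ3 - τ3) / (2 * (σ2 - τ2)) := by
    intro ξ
    rw [hchar]
    simp only [Matrix.cons_val_zero, Matrix.cons_val_one, Matrix.head_cons,
      Matrix.cons_val_two, Matrix.tail_cons]
    constructor
    · rintro (⟨-, h⟩ | ⟨-, h⟩ | ⟨-, h⟩)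
      · exact absurd h one_ne_zero
      · exact absurd h one_ne_zero
      · rw [eq_div_iff h2e2]; linear_combination h
    · intro h
      right; right
      refine ⟨by trivial, ?_⟩
      rw [eq_div_iff h2e2] at h
      linear_combination h
  have hset : Sing = {Projectivization.mk k (![0, 1, 0] : Fin 3 → k)
        (by intro hc; simpa using congrFun hc 1),
      Projectivization.mk k (![1, 0, 0] : Fin 3 → k)
        (by intro hc; simpa using congrFun hc 0),
      Projectivization.mk k
        (![(σ3 - τ3) / (2 * (σ2 - τ2)), 0, 1] : Fin 3 → k)
        (by intro hc; simpa using congrFun hc 2)} := by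
    ext P
    have hP := hchar P.rep P.rep_nonzero
    rw [Projectivization.mk_rep] at hP
    simp only [Set.mem_insert_iff, Set.mem_singleton_iff]
    constructor
    · intro hPSing
      rcases hP.mp hPSing with ⟨h1, h2⟩ | ⟨h1, h2⟩ | ⟨h1, h2⟩
      · right; left
        rw [← Projectivization.mk_rep P, Projectivization.mk_eq_mk_iff']
        refine ⟨P.rep 0, ?_⟩
        funext i; fin_cases i <;> simp [h1, h2]
      · left
        rw [← Projectivization.mk_rep P, Projectivization.mk_eq_mk_iff']
        refine ⟨P.rep 1, ?_⟩
        funext i; fin_cases i <;> simp [h1, h2]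
      · by_cases hz2 : P.rep 2 = 0
        · exfalso
          have h00 : P.rep 0 = 0 := by
            rw [hz2] at h2
            have h' : (2*(σ2-τ2)) * P.rep 0 = 0 := by linear_combination h2
            exact (mul_eq_zero.mp h').resolve_left h2e2
          apply P.rep_nonzero
          funext i; fin_cases i
          · exact h00
          · exact h1
          · exact hz2
        · right; right
          rw [← Projectivization.mk_rep P, Projectivization.mk_eq_mk_iff']
          refine ⟨P.rep 2, ?_⟩
          funext i; fin_cases i
          · simp only [Pi.smul_apply, smul_eq_mul, Fin.zero_eta, Matrix.cons_val_zero]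
            field_simp
            linear_combination -h2
          · simp [h1]
          · simp
    · intro hmemP
      rcases hmemP with h | h | h <;> subst h
      · refine (hchar _ _).mpr (Or.inr (Or.inl ⟨by simp, by simp⟩))
      · exact (hchar _ _).mpr (Or.inl ⟨by simp, by simp⟩)
      · refine (hchar _ _).mpr (Or.inr (Or.inr ⟨by simp, ?_⟩))
        simp only [Matrix.cons_val_zero, Matrix.cons_val_two, Matrix.tail_cons,
          Matrix.head_cons]
        field_simp
  have hABne : (Projectivization.mk k (![0, 1, 0] : Fin 3 → k)
        (by intro hc; simpa using congrFun hc 1))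
      ≠ Projectivization.mk k (![1, 0, 0] : Fin 3 → k)
        (by intro hc; simpa using congrFun hc 0) := by
    intro h
    obtain ⟨a, ha⟩ := (Projectivization.mk_eq_mk_iff' k _ _ _ _).mp h
    have h1 := congrFun ha 1
    simp at h1
  have hACne : (Projectivization.mk k (![0, 1, 0] : Fin 3 → k)
        (by intro hc; simpa using congrFun hc 1))
      ≠ Projectivization.mk k (![(σ3 - τ3) / (2 * (σ2 - τ2)), 0, 1] : Fin 3 → k)
        (by intro hc; simpa using congrFun hc 2) := by
    intro h
    obtain ⟨a, ha⟩ := (Projectivization.mk_eq_mk_iff' k _ _ _ _).mp h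
    have h1 := congrFun ha 1
    simp at h1
  have hBCne : (Projectivization.mk k (![1, 0, 0] : Fin 3 → k)
        (by intro hc; simpa using congrFun hc 0))
      ≠ Projectivization.mk k (![(σ3 - τ3) / (2 * (σ2 - τ2)), 0, 1] : Fin 3 → k)
        (by intro hc; simpa using congrFun hc 2) := by
    intro h
    obtain ⟨a, ha⟩ := (Projectivization.mk_eq_mk_iff' k _ _ _ _).mp h
    have h1 := congrFun ha 2
    have h0 := congrFun ha 0
    simp at h1 h0
    rw [h1] at h0
    simp at h0
  refine ⟨goal1, hset, ?_⟩
  rw [hset]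
  exact Set.ncard_eq_three.mpr ⟨_, _, _, hABne, hACne, hBCne, rfl⟩
end
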